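/- arXiv:1603.07708 — 5 statements merged into one kernel-verified Lean document; each statement's English description precedes it below -/
import Mathlib

section
/- Let (a_0, …, a_{f−1}) be a tame signature for a prime p and integer f ≥ 1. Then for every subset J ⊆ ℤ/fℤ one has δ(J) ⊆ μ(J) ⊆ δ(J) ∪ J, where δ(J) denotes the image of J under the induced map δ : ℤ/fℤ → ℤ/fℤ. -/
open scoped Classical

/-- `a : ℤ → ℕ` represents a tame signature `(a_0, …, a_{f−1}) ∈ {1,…,p}^f` (not all
entries equal to `p`), with the indices extended to all of `ℤ` by `f`-periodicity. -/
def IsTameSignature (p f : ℕ) (a : ℤ → ℕ) : Prop :=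
  0 < f ∧ (∀ j : ℤ, a (j + f) = a j) ∧ (∀ j : ℤ, 1 ≤ a j ∧ a j ≤ p) ∧ ∃ j : ℤ, a j ≠ p

/-- `([i], [i+t])` with `1 ≤ t ≤ f−1` is a dependent pair if `a_{i+1} = p`,
`a_{i+t+1} ≠ p`, and for some `s ∈ {1,…,t}` one has
`a_{i+2} = ⋯ = a_{i+s} = p−1` and `a_{i+s+1} = ⋯ = a_{i+t} = p`. -/
def IsDependentPair (p f : ℕ) (a : ℤ → ℕ) (x y : ZMod f) : Prop :=
  ∃ i t : ℤ, 1 ≤ t ∧ t ≤ (f : ℤ) - 1 ∧ x = (i : ZMod f) ∧ y = ((i + t : ℤ) : ZMod f) ∧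
    a (i + 1) = p ∧ a (i + t + 1) ≠ p ∧
    ∃ s : ℤ, 1 ≤ s ∧ s ≤ t ∧
      (∀ m : ℤ, i + 2 ≤ m → m ≤ i + s → a m = p - 1) ∧
      (∀ m : ℤ, i + s + 1 ≤ m → m ≤ i + t → a m = p)

/-- A subset `J ⊆ ℤ/fℤ` is admissible if for every dependent pair `([j],[i])` with
`[i] ∈ J` one also has `[j] ∈ J`. -/
def SigAdmissible (p f : ℕ) (a : ℤ → ℕ) (J : Set (ZMod f)) : Prop :=
  ∀ x y : ZMod f, IsDependentPair p f a x y → y ∈ J → x ∈ J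

/-- The shifting function `δ : ℤ → ℤ`: `δ(j) = j` unless
`(a_{i+1}, a_{i+2}, …, a_j) = (p, p−1, …, p−1)` for some (necessarily unique) `i < j`,
in which case `δ(j) = i`. -/
noncomputable def sigDelta (p : ℕ) (a : ℤ → ℕ) (j : ℤ) : ℤ :=
  if h : ∃ i : ℤ, i < j ∧ a (i + 1) = p ∧ ∀ m : ℤ, i + 1 < m → m ≤ j → a m = p - 1
  then h.choose else j

/-- The map `ℤ/fℤ → ℤ/fℤ` induced by `δ`. -/
noncomputable def sigDeltaBar (p f : ℕ) (a : ℤ → ℕ) (x : ZMod f) : ZMod f :=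
  ((sigDelta p a (x.val : ℤ) : ℤ) : ZMod f)

/-- The set `μ(J) = {[i_1], …, [i_r]}` produced by the construction from a chosen
starting integer `i₁` (whose class lies in `δ(J) ∖ J`): `j₁` is the least integer with
`j₁ > i₁`, `[j₁] ∈ J` and `δ(j₁) = i₁`; writing `J = {[j_1],…,[j_r]}` with
`j_1 < ⋯ < j_r < j_1 + f`, one sets inductively `i_κ = δ(j_κ)` if `i_{κ−1} < δ(j_κ)`
and `i_κ = j_κ` otherwise. -/
noncomputable def sigMuFrom (p f : ℕ) (a : ℤ → ℕ) (J : Set (ZMod f)) (i₁ : ℤ) :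
    Set (ZMod f) :=
  let j₁ : ℤ :=
    if h : ∃ j : ℤ, (i₁ < j ∧ (j : ZMod f) ∈ J ∧ sigDelta p a j = i₁) ∧
        ∀ j' : ℤ, (i₁ < j' ∧ (j' : ZMod f) ∈ J ∧ sigDelta p a j' = i₁) → j ≤ j'
    then h.choose else i₁ + 1
  -- the representatives of `J` in the window `[j₁, j₁ + f)`, in increasing order:
  -- `jSeq κ` is the `(κ+1)`-st smallest, i.e. `j_{κ+1}` in the notation above
  let jSeq : ℕ → ℤ := fun κ =>
    j₁ + (Nat.nth (fun v : ℕ => ∃ x ∈ J, (x - (j₁ : ZMod f)).val = v) κ : ℤ)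
  let iSeq : ℕ → ℤ := fun κ =>
    Nat.rec (motive := fun _ => ℤ) i₁
      (fun κ' ih =>
        if ih < sigDelta p a (jSeq (κ' + 1)) then sigDelta p a (jSeq (κ' + 1))
        else jSeq (κ' + 1)) κ
  { y : ZMod f | ∃ κ : ℕ, κ < J.ncard ∧ y = (Int.cast (iSeq κ) : ZMod f) }

/-- The set `μ(J)`: if `δ(J) ⊆ J` then `μ(J) = J`; otherwise it is produced by the
construction `sigMuFrom` applied to a choice of `[i₁] ∈ δ(J) ∖ J`. -/
noncomputable def sigMu (p f : ℕ) (a : ℤ → ℕ) (J : Set (ZMod f)) : Set (ZMod f) :=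
  if sigDeltaBar p f a '' J ⊆ J then J
  else if h : ∃ i : ℤ, (i : ZMod f) ∈ (sigDeltaBar p f a '' J) \ J
    then sigMuFrom p f a J h.choose else J

/-! ### Auxiliary development -/

namespace SigAux

variable {p f : ℕ} {a : ℤ → ℕ}

/-- The defining property of `δ(j) = i` in the nontrivial case. -/
def SigP (p : ℕ) (a : ℤ → ℕ) (j i : ℤ) : Prop :=
  i < j ∧ a (i + 1) = p ∧ ∀ m : ℤ, i + 1 < m → m ≤ j → a m = p - 1

theorem sigP_unique (hp : 0 < p) {j i i' : ℤ} (h : SigP p a j i) (h' : SigP p a j i') :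
    i = i' := by
  obtain ⟨hj, hA, hB⟩ := h
  obtain ⟨hj', hA', hB'⟩ := h'
  by_contra hne
  rcases lt_or_gt_of_ne hne with hlt | hlt
  · have h1 := hB (i' + 1) (by omega) (by omega)
    omega
  · have h1 := hB' (i + 1) (by omega) (by omega)
    omega

theorem sigDelta_eq_of_sigP (hp : 0 < p) {j i : ℤ} (h : SigP p a j i) :
    sigDelta p a j = i := by
  have hex : ∃ i : ℤ, i < j ∧ a (i + 1) = p ∧ ∀ m : ℤ, i + 1 < m → m ≤ j → a m = p - 1 :=
    ⟨i, h⟩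
  rw [sigDelta, dif_pos hex]
  exact sigP_unique hp hex.choose_spec h

theorem sigDelta_spec (j : ℤ) : sigDelta p a j = j ∨ SigP p a j (sigDelta p a j) := by
  rw [sigDelta]
  split
  · next h => exact Or.inr h.choose_spec
  · exact Or.inl rfl

theorem sigDelta_le (j : ℤ) : sigDelta p a j ≤ j := by
  rcases sigDelta_spec (p := p) (a := a) j with h | h
  · exact h.le
  · exact h.1.le

theorem sigDelta_lt {j : ℤ} (h : sigDelta p a j < j) : SigP p a j (sigDelta p a j) := by
  rcases sigDelta_spec (p := p) (a := a) j with h' | h'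
  · omega
  · exact h'

theorem sigDelta_congr (hp : 0 < p) {j j' : ℤ} (h1 : sigDelta p a j' < j) (h2 : j ≤ j') :
    sigDelta p a j = sigDelta p a j' := by
  have hlt : sigDelta p a j' < j' := lt_of_lt_of_le h1 h2
  obtain ⟨-, hA, hB⟩ := sigDelta_lt hlt
  exact sigDelta_eq_of_sigP hp ⟨h1, hA, fun m hm1 hm2 => hB m hm1 (hm2.trans h2)⟩

theorem a_period (ha : ∀ j : ℤ, a (j + f) = a j) (k j : ℤ) : a (j + f * k) = a j := by
  induction k using Int.induction_on with
  | zero => simp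
  | succ n ih =>
      have e : j + (f : ℤ) * ((n : ℤ) + 1) = (j + f * n) + f := by ring
      rw [e, ha, ih]
  | pred n ih =>
      have e : (j + (f : ℤ) * (-(n : ℤ) - 1)) + f = j + f * (-(n : ℤ)) := by ring
      have h2 := ha (j + (f : ℤ) * (-(n : ℤ) - 1))
      rw [e] at h2
      exact h2.symm.trans ih

theorem sigP_shift (ha : ∀ j : ℤ, a (j + f) = a j) (k : ℤ) {j i : ℤ} (h : SigP p a j i) :
    SigP p a (j + f * k) (i + f * k) := by
  obtain ⟨h1, h2, h3⟩ := h
  refine ⟨by omega, ?_, ?_⟩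
  · have e : i + (f : ℤ) * k + 1 = (i + 1) + f * k := by ring
    rw [e, a_period ha]
    exact h2
  · intro m hm1 hm2
    have e : m = (m - f * k) + f * k := by ring
    rw [e, a_period ha]
    exact h3 _ (by omega) (by omega)

theorem sigDelta_shift (hp : 0 < p) (ha : ∀ j : ℤ, a (j + f) = a j) (k j : ℤ) :
    sigDelta p a (j + f * k) = sigDelta p a j + f * k := by
  by_cases hex : ∃ i, SigP p a j i
  · obtain ⟨i, hi⟩ := hex
    rw [sigDelta_eq_of_sigP hp hi, sigDelta_eq_of_sigP hp (sigP_shift ha k hi)]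
  · have h1 : sigDelta p a j = j := by
      rcases sigDelta_spec (p := p) (a := a) j with h | h
      · exact h
      · exact absurd ⟨_, h⟩ hex
    have h2 : sigDelta p a (j + f * k) = j + f * k := by
      rcases sigDelta_spec (p := p) (a := a) (j + f * k) with h | h
      · exact h
      · exfalso
        have h' := sigP_shift ha (-k) h
        have e : j + (f : ℤ) * k + f * (-k) = j := by ring
        rw [e] at h'
        exact hex ⟨_, h'⟩
    rw [h1, h2]

theorem intCast_val_intCast (hf : 0 < f) (j : ℤ) :
    (((j : ZMod f).val : ℤ) : ZMod f) = (j : ZMod f) := by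
  haveI : NeZero f := ⟨hf.ne'⟩
  rw [Int.cast_natCast, ZMod.natCast_val, ZMod.cast_id]

theorem exists_shift_eq (hf : 0 < f) {j c : ℤ} (h : (j : ZMod f) = (c : ZMod f)) :
    ∃ k : ℤ, c = j + f * k := by
  obtain ⟨k, hk⟩ := ((ZMod.intCast_eq_intCast_iff _ _ _).1 h).dvd
  exact ⟨k, by linarith⟩

theorem sigDeltaBar_intCast (hp : 0 < p) (hf : 0 < f) (ha : ∀ j : ℤ, a (j + f) = a j)
    (j : ℤ) : sigDeltaBar p f a (j : ZMod f) = ((sigDelta p a j : ℤ) : ZMod f) := by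
  haveI : NeZero f := ⟨hf.ne'⟩
  have h0 : sigDeltaBar p f a (j : ZMod f)
      = ((sigDelta p a (((j : ZMod f).val : ℤ)) : ℤ) : ZMod f) := rfl
  obtain ⟨k, hk⟩ := exists_shift_eq hf (intCast_val_intCast hf j)
  rw [h0, hk, sigDelta_shift hp ha]
  push_cast
  simp [ZMod.natCast_self]

/-! ### Mirror definitions for the components of `sigMuFrom` -/

noncomputable def myJ1 (p f : ℕ) (a : ℤ → ℕ) (J : Set (ZMod f)) (i₁ : ℤ) : ℤ :=
  if h : ∃ j : ℤ, (i₁ < j ∧ (j : ZMod f) ∈ J ∧ sigDelta p a j = i₁) ∧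
      ∀ j' : ℤ, (i₁ < j' ∧ (j' : ZMod f) ∈ J ∧ sigDelta p a j' = i₁) → j ≤ j'
  then h.choose else i₁ + 1

def myQ (p f : ℕ) (a : ℤ → ℕ) (J : Set (ZMod f)) (i₁ : ℤ) : ℕ → Prop :=
  fun v : ℕ => ∃ x ∈ J, (x - (myJ1 p f a J i₁ : ZMod f)).val = v

noncomputable def myJseq (p f : ℕ) (a : ℤ → ℕ) (J : Set (ZMod f)) (i₁ : ℤ) (κ : ℕ) : ℤ :=
  myJ1 p f a J i₁ + (Nat.nth (myQ p f a J i₁) κ : ℤ)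

noncomputable def myIseq (p f : ℕ) (a : ℤ → ℕ) (J : Set (ZMod f)) (i₁ : ℤ) : ℕ → ℤ :=
  fun κ =>
    Nat.rec (motive := fun _ => ℤ) i₁
      (fun κ' ih =>
        if ih < sigDelta p a (myJseq p f a J i₁ (κ' + 1)) then
          sigDelta p a (myJseq p f a J i₁ (κ' + 1))
        else myJseq p f a J i₁ (κ' + 1)) κ

theorem sigMuFrom_eq (p f : ℕ) (a : ℤ → ℕ) (J : Set (ZMod f)) (i₁ : ℤ) :
    sigMuFrom p f a J i₁ =
      { y : ZMod f | ∃ κ : ℕ, κ < J.ncard ∧ y = ((myIseq p f a J i₁ κ : ℤ) : ZMod f) } := rfl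

theorem myIseq_zero (p f : ℕ) (a : ℤ → ℕ) (J : Set (ZMod f)) (i₁ : ℤ) :
    myIseq p f a J i₁ 0 = i₁ := rfl

theorem myIseq_succ (p f : ℕ) (a : ℤ → ℕ) (J : Set (ZMod f)) (i₁ : ℤ) (κ : ℕ) :
    myIseq p f a J i₁ (κ + 1) =
      if myIseq p f a J i₁ κ < sigDelta p a (myJseq p f a J i₁ (κ + 1)) then
        sigDelta p a (myJseq p f a J i₁ (κ + 1))
      else myJseq p f a J i₁ (κ + 1) := rfl

section Main

variable {J : Set (ZMod f)} {i₁ : ℤ}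

theorem myJ1_spec (hp : 0 < p) (hf : 0 < f) (ha : ∀ j : ℤ, a (j + f) = a j)
    (h₁ : (i₁ : ZMod f) ∈ (sigDeltaBar p f a '' J) \ J) :
    (i₁ < myJ1 p f a J i₁ ∧ ((myJ1 p f a J i₁ : ℤ) : ZMod f) ∈ J ∧
        sigDelta p a (myJ1 p f a J i₁) = i₁) ∧
      ∀ j' : ℤ, (i₁ < j' ∧ (j' : ZMod f) ∈ J ∧ sigDelta p a j' = i₁) → myJ1 p f a J i₁ ≤ j' := by
  haveI : NeZero f := ⟨hf.ne'⟩
  obtain ⟨⟨x, hxJ, hxd⟩, hni⟩ := h₁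
  have hex : ∃ j : ℤ, i₁ < j ∧ (j : ZMod f) ∈ J ∧ sigDelta p a j = i₁ := by
    have hxv : (((x.val : ℤ) : ℤ) : ZMod f) = x := by
      rw [Int.cast_natCast, ZMod.natCast_val, ZMod.cast_id]
    have hxd' : ((sigDelta p a (x.val : ℤ) : ℤ) : ZMod f) = (i₁ : ZMod f) := hxd
    obtain ⟨k, hk⟩ := exists_shift_eq hf hxd'
    set j : ℤ := (x.val : ℤ) + f * k with hj
    have hδj : sigDelta p a j = i₁ := by rw [hj, sigDelta_shift hp ha]; omega
    have hjJ : (j : ZMod f) ∈ J := by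
      have : (j : ZMod f) = x := by rw [hj]; push_cast; simp [hxv, ZMod.natCast_self]
      rw [this]; exact hxJ
    refine ⟨j, ?_, hjJ, hδj⟩
    have hle := sigDelta_le (p := p) (a := a) j
    rcases lt_or_eq_of_le hle with h | h
    · omega
    · exfalso
      have : (i₁ : ZMod f) ∈ J := by rw [← hδj, h]; exact hjJ
      exact hni this
  have hexmin : ∃ j : ℤ, (i₁ < j ∧ (j : ZMod f) ∈ J ∧ sigDelta p a j = i₁) ∧
      ∀ j' : ℤ, (i₁ < j' ∧ (j' : ZMod f) ∈ J ∧ sigDelta p a j' = i₁) → j ≤ j' := by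
    obtain ⟨lb, h1, h2⟩ :=
      Int.exists_least_of_bdd (P := fun j => i₁ < j ∧ (j : ZMod f) ∈ J ∧ sigDelta p a j = i₁)
        ⟨i₁, fun z hz => hz.1.le⟩ hex
    exact ⟨lb, h1, h2⟩
  have hj1 : myJ1 p f a J i₁ = hexmin.choose := by rw [myJ1, dif_pos hexmin]
  have hspec := hexmin.choose_spec
  rw [← hj1] at hspec
  exact ⟨hspec.1, hspec.2⟩

theorem myQ_setOf :
    setOf (myQ p f a J i₁) = (fun x : ZMod f => (x - (myJ1 p f a J i₁ : ZMod f)).val) '' J := by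
  ext v
  constructor
  · rintro ⟨x, h1, h2⟩; exact ⟨x, h1, h2⟩
  · rintro ⟨x, h1, h2⟩; exact ⟨x, h1, h2⟩

theorem myQ_finite (hf : 0 < f) : (setOf (myQ p f a J i₁)).Finite := by
  haveI : NeZero f := ⟨hf.ne'⟩
  rw [myQ_setOf]; exact J.toFinite.image _

theorem myQ_card (hf : 0 < f) (hfin : (setOf (myQ p f a J i₁)).Finite) :
    hfin.toFinset.card = J.ncard := by
  haveI : NeZero f := ⟨hf.ne'⟩
  rw [← Set.ncard_eq_toFinset_card _ hfin, myQ_setOf]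
  apply Set.ncard_image_of_injective
  intro x y hxy
  have h1 : x - (myJ1 p f a J i₁ : ZMod f) = y - (myJ1 p f a J i₁ : ZMod f) :=
    ZMod.val_injective f hxy
  exact sub_left_injective h1

theorem myQ_zero (hp : 0 < p) (hf : 0 < f) (ha : ∀ j : ℤ, a (j + f) = a j)
    (h₁ : (i₁ : ZMod f) ∈ (sigDeltaBar p f a '' J) \ J) : myQ p f a J i₁ 0 := by
  haveI : NeZero f := ⟨hf.ne'⟩
  obtain ⟨⟨-, hj₁J, -⟩, -⟩ := myJ1_spec hp hf ha h₁
  exact ⟨((myJ1 p f a J i₁ : ℤ) : ZMod f), hj₁J, by simp⟩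

theorem myJseq_zero (hp : 0 < p) (hf : 0 < f) (ha : ∀ j : ℤ, a (j + f) = a j)
    (h₁ : (i₁ : ZMod f) ∈ (sigDeltaBar p f a '' J) \ J) :
    myJseq p f a J i₁ 0 = myJ1 p f a J i₁ := by
  rw [myJseq, Nat.nth_zero_of_zero (myQ_zero hp hf ha h₁)]
  simp

theorem myJseq_lt (hf : 0 < f) {κ κ' : ℕ} (h : κ < κ') (h' : κ' < J.ncard) :
    myJseq p f a J i₁ κ < myJseq p f a J i₁ κ' := by
  have := Nat.nth_lt_nth_of_lt_card (myQ_finite (p := p) (a := a) (J := J) (i₁ := i₁) hf) h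
    (lt_of_lt_of_eq h' (myQ_card hf (myQ_finite hf)).symm)
  rw [myJseq, myJseq]
  omega

theorem myJseq_mem (hf : 0 < f) {κ : ℕ} (hκ : κ < J.ncard) :
    ((myJseq p f a J i₁ κ : ℤ) : ZMod f) ∈ J := by
  haveI : NeZero f := ⟨hf.ne'⟩
  have hQ : myQ p f a J i₁ (Nat.nth (myQ p f a J i₁) κ) :=
    Nat.nth_mem_of_lt_card (myQ_finite hf) (lt_of_lt_of_eq hκ (myQ_card hf (myQ_finite hf)).symm)
  obtain ⟨x, hxJ, hxv⟩ := hQ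
  have : ((myJseq p f a J i₁ κ : ℤ) : ZMod f) = x := by
    rw [myJseq]
    push_cast
    rw [← hxv, ZMod.natCast_val, ZMod.cast_id]
    ring
  rw [this]; exact hxJ

theorem myJseq_surj (hf : 0 < f) {x : ZMod f} (hx : x ∈ J) :
    ∃ κ : ℕ, κ < J.ncard ∧ ((myJseq p f a J i₁ κ : ℤ) : ZMod f) = x := by
  haveI : NeZero f := ⟨hf.ne'⟩
  have hQv : myQ p f a J i₁ ((x - (myJ1 p f a J i₁ : ZMod f)).val) := ⟨x, hx, rfl⟩
  refine ⟨Nat.count (myQ p f a J i₁) ((x - (myJ1 p f a J i₁ : ZMod f)).val), ?_, ?_⟩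
  · rw [← myQ_card hf (myQ_finite hf)]
    exact Nat.count_lt_card (myQ_finite hf) hQv
  · rw [myJseq, Nat.nth_count hQv]
    push_cast
    rw [ZMod.natCast_val, ZMod.cast_id]
    ring

theorem myIseq_le (hp : 0 < p) (hf : 0 < f) (ha : ∀ j : ℤ, a (j + f) = a j)
    (h₁ : (i₁ : ZMod f) ∈ (sigDeltaBar p f a '' J) \ J) (κ : ℕ) :
    myIseq p f a J i₁ κ ≤ myJseq p f a J i₁ κ := by
  cases κ with
  | zero =>
      rw [myIseq_zero, myJseq_zero hp hf ha h₁]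
      exact (myJ1_spec hp hf ha h₁).1.1.le
  | succ ν =>
      rw [myIseq_succ]
      split
      · exact sigDelta_le _
      · exact le_refl _

/-- Key claim: every `δ(j_κ)` occurs among the `i_λ`. -/
theorem myIseq_delta (hp : 0 < p) (hf : 0 < f) (ha : ∀ j : ℤ, a (j + f) = a j)
    (h₁ : (i₁ : ZMod f) ∈ (sigDeltaBar p f a '' J) \ J) {κ : ℕ} (hκ : κ < J.ncard) :
    ∃ lam : ℕ, lam < J.ncard ∧ myIseq p f a J i₁ lam = sigDelta p a (myJseq p f a J i₁ κ) := by
  obtain ⟨⟨hij₁, hj₁J, hδj₁⟩, -⟩ := myJ1_spec hp hf ha h₁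
  cases κ with
  | zero =>
      exact ⟨0, hκ, by rw [myIseq_zero, myJseq_zero hp hf ha h₁, hδj₁]⟩
  | succ ν =>
      by_cases hbr : myIseq p f a J i₁ ν < sigDelta p a (myJseq p f a J i₁ (ν + 1))
      · exact ⟨ν + 1, hκ, by rw [myIseq_succ, if_pos hbr]⟩
      · push_neg at hbr
        have hjlt : myJseq p f a J i₁ ν < myJseq p f a J i₁ (ν + 1) :=
          myJseq_lt hf (Nat.lt_succ_self ν) hκ
        have hleν := myIseq_le hp hf ha h₁ ν
        have hexR : ∃ lam : ℕ, sigDelta p a (myJseq p f a J i₁ (ν + 1)) ≤ myIseq p f a J i₁ lam :=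
          ⟨ν, hbr⟩
        have hlamle : Nat.find hexR ≤ ν := Nat.find_min' hexR hbr
        refine ⟨Nat.find hexR, by omega, ?_⟩
        by_contra hne
        have hdd : sigDelta p a (myJseq p f a J i₁ (ν + 1)) < myIseq p f a J i₁ (Nat.find hexR) :=
          lt_of_le_of_ne (Nat.find_spec hexR) (Ne.symm hne)
        have hjle : myJseq p f a J i₁ (Nat.find hexR) < myJseq p f a J i₁ (ν + 1) :=
          myJseq_lt hf (by omega) hκ
        have hdj : sigDelta p a (myJseq p f a J i₁ (ν + 1)) < myJseq p f a J i₁ (Nat.find hexR) :=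
          lt_of_lt_of_le hdd (myIseq_le hp hf ha h₁ _)
        have hkey : sigDelta p a (myJseq p f a J i₁ (Nat.find hexR))
            = sigDelta p a (myJseq p f a J i₁ (ν + 1)) := sigDelta_congr hp hdj hjle.le
        cases hfind : Nat.find hexR with
        | zero =>
            rw [hfind] at hdd hkey
            rw [myIseq_zero] at hdd
            rw [myJseq_zero hp hf ha h₁, hδj₁] at hkey
            omega
        | succ μ =>
            have hmin : ¬ sigDelta p a (myJseq p f a J i₁ (ν + 1)) ≤ myIseq p f a J i₁ μ :=
              Nat.find_min hexR (by omega)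
            push_neg at hmin
            rw [hfind] at hdd hkey
            rw [myIseq_succ, if_pos (by rw [hkey]; exact hmin)] at hdd
            omega

theorem sigMuFrom_spec (hp : 0 < p) (hf : 0 < f) (ha : ∀ j : ℤ, a (j + f) = a j)
    (h₁ : (i₁ : ZMod f) ∈ (sigDeltaBar p f a '' J) \ J) :
    sigDeltaBar p f a '' J ⊆ sigMuFrom p f a J i₁ ∧
      sigMuFrom p f a J i₁ ⊆ (sigDeltaBar p f a '' J) ∪ J := by
  rw [sigMuFrom_eq]
  constructor
  · rintro y ⟨x, hxJ, rfl⟩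
    obtain ⟨κ, hκ, hx⟩ := myJseq_surj (p := p) (a := a) (i₁ := i₁) hf hxJ
    obtain ⟨lam, hlam, hlamEq⟩ := myIseq_delta hp hf ha h₁ hκ
    refine ⟨lam, hlam, ?_⟩
    rw [← hx, sigDeltaBar_intCast hp hf ha, hlamEq]
  · rintro y ⟨κ, hκ, rfl⟩
    cases κ with
    | zero =>
        rw [myIseq_zero]
        exact Or.inl h₁.1
    | succ ν =>
        rw [myIseq_succ]
        split
        · left
          rw [← sigDeltaBar_intCast hp hf ha]
          exact ⟨_, myJseq_mem hf hκ, rfl⟩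
        · right
          exact myJseq_mem hf hκ

end Main

end SigAux

/-- For every tame signature `(a_0,…,a_{f−1})` and every subset `J ⊆ ℤ/fℤ`, one has
`δ(J) ⊆ μ(J) ⊆ δ(J) ∪ J`, where `δ(J)` is the image of `J` under the induced map
`δ : ℤ/fℤ → ℤ/fℤ`. -/
theorem sigDelta_subset_sigMu_subset (p f : ℕ) (a : ℤ → ℕ) (hp : p.Prime)
    (hsig : IsTameSignature p f a) (J : Set (ZMod f)) :
    sigDeltaBar p f a '' J ⊆ sigMu p f a J ∧
      sigMu p f a J ⊆ (sigDeltaBar p f a '' J) ∪ J := by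
  obtain ⟨hf, ha, -, -⟩ := hsig
  have hp0 : 0 < p := hp.pos
  haveI : NeZero f := ⟨hf.ne'⟩
  by_cases hsub : sigDeltaBar p f a '' J ⊆ J
  · rw [sigMu, if_pos hsub]
    exact ⟨hsub, fun y hy => Or.inr hy⟩
  · have hex : ∃ i : ℤ, (i : ZMod f) ∈ (sigDeltaBar p f a '' J) \ J := by
      obtain ⟨y, hy1, hy2⟩ := Set.not_subset.1 hsub
      refine ⟨(y.val : ℤ), ?_⟩
      have : (((y.val : ℤ)) : ZMod f) = y := by
        rw [Int.cast_natCast, ZMod.natCast_val, ZMod.cast_id]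
      rw [this]
      exact ⟨hy1, hy2⟩
    rw [sigMu, if_neg hsub, dif_pos hex]
    exact SigAux.sigMuFrom_spec hp0 hf ha hex.choose_spec
end

section
/- Let (a_0, …, a_{f−1}) be a tame signature for a prime p and integer f ≥ 1, and let J ⊆ ℤ/fℤ with δ(J) ⊄ J. Then the set μ(J) = {[i_1], …, [i_r]} produced by the construction is independent of the choice of the initial element [i_1] ∈ δ(J) ∖ J. -/
open scoped Classical

section
variable (p f : ℕ) (a : ℤ → ℕ)

/-- the jump predicate -/
def SP (i j : ℤ) : Prop := i < j ∧ a (i + 1) = p ∧ ∀ m : ℤ, i + 1 < m → m ≤ j → a m = p - 1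

variable {p a}

lemma SP_uniq (hp : 2 ≤ p) {i i' j : ℤ} (h : SP p a i j) (h' : SP p a i' j) : i = i' := by
  by_contra hne
  wlog hlt : i < i' generalizing i i'
  · exact this h' h (Ne.symm hne) (by omega)
  have h1 := h.2.2 (i' + 1) (by omega) (by have := h'.1; omega)
  have h2 := h'.2.1
  omega

lemma sigDelta_eq_of_SP (hp : 2 ≤ p) {i j : ℤ} (h : SP p a i j) : sigDelta p a j = i := by
  rw [sigDelta, dif_pos ⟨i, h⟩]
  exact SP_uniq hp (Exists.choose_spec (⟨i, h⟩ : ∃ i, SP p a i j)) h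

lemma sigDelta_cases (j : ℤ) : sigDelta p a j = j ∨ SP p a (sigDelta p a j) j := by
  unfold sigDelta
  by_cases h : ∃ i : ℤ, i < j ∧ a (i + 1) = p ∧ ∀ m : ℤ, i + 1 < m → m ≤ j → a m = p - 1
  · rw [dif_pos h]; exact Or.inr h.choose_spec
  · rw [dif_neg h]; exact Or.inl rfl

lemma sigDelta_le (j : ℤ) : sigDelta p a j ≤ j := by
  rcases sigDelta_cases (p := p) (a := a) j with h | h
  · exact le_of_eq h
  · exact h.1.le

lemma SP_of_sigDelta_lt {j : ℤ} (h : sigDelta p a j < j) : SP p a (sigDelta p a j) j := by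
  rcases sigDelta_cases (p := p) (a := a) j with h' | h'
  · omega
  · exact h'

lemma SP_trunc {i j j' : ℤ} (h : SP p a i j) (h1 : i < j') (h2 : j' ≤ j) : SP p a i j' :=
  ⟨h1, h.2.1, fun m hm hm' => h.2.2 m hm (by omega)⟩

end


section
variable {p f : ℕ} {a : ℤ → ℕ}

lemma a_shift (hper : ∀ j : ℤ, a (j + f) = a j) (j k : ℤ) : a (j + k * f) = a j := by
  induction k using Int.induction_on with
  | zero => simp
  | succ n ih => have := hper (j + n * f); push_cast at *; rw [← ih]; rw [← this]; ring_nf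
  | pred n ih => have := hper (j + (-n - 1) * f); push_cast at *; rw [← ih, ← this]; ring_nf

end


section
variable {p f : ℕ} {a : ℤ → ℕ}

lemma SP_shift (hper : ∀ j : ℤ, a (j + f) = a j) {i j : ℤ} (k : ℤ) (h : SP p a i j) :
    SP p a (i + k * f) (j + k * f) := by
  obtain ⟨h1, h2, h3⟩ := h
  refine ⟨by omega, ?_, fun m hm hm' => ?_⟩
  · rw [show i + k * f + 1 = (i + 1) + k * f by ring, a_shift hper]; exact h2
  · have := h3 (m - k * f) (by omega) (by omega)
    rwa [show m = (m - k * f) + k * f by ring, a_shift hper]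

lemma sigDelta_shift (hp : 2 ≤ p) (hper : ∀ j : ℤ, a (j + f) = a j) (j k : ℤ) :
    sigDelta p a (j + k * f) = sigDelta p a j + k * f := by
  rcases sigDelta_cases (p := p) (a := a) j with h | h
  · rcases sigDelta_cases (p := p) (a := a) (j + k * f) with h' | h'
    · omega
    · have := SP_shift hper (-k) h'
      rw [show j + k * f + -k * f = j by ring] at this
      have h2 := sigDelta_eq_of_SP hp this
      rw [neg_mul] at h2
      omega
  · have := sigDelta_eq_of_SP hp (SP_shift hper k h)
    omega

end

section
variable (p f : ℕ) (a : ℤ → ℕ) (J : Set (ZMod f))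

def sCond (i₁ j : ℤ) : Prop := i₁ < j ∧ (j : ZMod f) ∈ J ∧ sigDelta p a j = i₁

noncomputable def sJ1 (i₁ : ℤ) : ℤ :=
  if h : ∃ j : ℤ, sCond p f a J i₁ j ∧ ∀ j' : ℤ, sCond p f a J i₁ j' → j ≤ j'
  then h.choose else i₁ + 1

def sQ (b : ZMod f) (v : ℕ) : Prop := ∃ x ∈ J, (x - b).val = v

noncomputable def sJSeq (i₁ : ℤ) (κ : ℕ) : ℤ :=
  sJ1 p f a J i₁ + (Nat.nth (sQ f J ((sJ1 p f a J i₁ : ZMod f))) κ : ℤ)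

noncomputable def sISeq (i₁ : ℤ) : ℕ → ℤ :=
  Nat.rec (motive := fun _ => ℤ) i₁
    (fun κ' ih =>
      if ih < sigDelta p a (sJSeq p f a J i₁ (κ' + 1)) then sigDelta p a (sJSeq p f a J i₁ (κ' + 1))
      else sJSeq p f a J i₁ (κ' + 1))

lemma sigMuFrom_eq (i₁ : ℤ) :
    sigMuFrom p f a J i₁
      = { y : ZMod f | ∃ κ : ℕ, κ < J.ncard ∧ y = ((sISeq p f a J i₁ κ : ℤ) : ZMod f) } := rfl

end

section
variable {p f : ℕ} {a : ℤ → ℕ} {J : Set (ZMod f)}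

lemma cast_val_intCast [NeZero f] (x : ZMod f) : (((x.val : ℤ)) : ZMod f) = x := by
  push_cast
  simp [ZMod.natCast_val, ZMod.cast_id]

lemma exists_min_cond (hp2 : 2 ≤ p) (hper : ∀ j : ℤ, a (j + f) = a j) [NeZero f] {i₁ : ℤ}
    (hstart : (i₁ : ZMod f) ∈ (sigDeltaBar p f a '' J) \ J) :
    ∃ j : ℤ, sCond p f a J i₁ j ∧ ∀ j' : ℤ, sCond p f a J i₁ j' → j ≤ j' := by
  obtain ⟨⟨x, hx, hdx⟩, hni⟩ := hstart
  apply Int.exists_least_of_bdd ⟨i₁ + 1, by rintro z ⟨h1, -, -⟩; omega⟩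
  set d := sigDelta p a (x.val : ℤ) with hd
  have hdle : d ≤ (x.val : ℤ) := sigDelta_le _
  have hdcast : ((d : ℤ) : ZMod f) = (i₁ : ZMod f) := hdx
  have hcase : d < (x.val : ℤ) := by
    rcases lt_or_eq_of_le hdle with h | h
    · exact h
    · exfalso
      rw [h, cast_val_intCast] at hdcast
      rw [hdcast] at hx
      exact hni hx
  have hSP : SP p a d (x.val : ℤ) := SP_of_sigDelta_lt hcase
  rw [ZMod.intCast_eq_intCast_iff] at hdcast
  obtain ⟨k, hk⟩ := hdcast.dvd
  rw [mul_comm] at hk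
  refine ⟨(x.val : ℤ) + k * f, ?_, ?_, ?_⟩
  · omega
  · rw [show (((x.val : ℤ) + k * f : ℤ) : ZMod f) = (((x.val : ℤ) : ℤ) : ZMod f) by
      push_cast; ring_nf; simp]
    rwa [cast_val_intCast]
  · rw [sigDelta_shift hp2 hper, ← hd]; omega

lemma sJ1_spec (hp2 : 2 ≤ p) (hper : ∀ j : ℤ, a (j + f) = a j) [NeZero f] {i₁ : ℤ}
    (hstart : (i₁ : ZMod f) ∈ (sigDeltaBar p f a '' J) \ J) :
    sCond p f a J i₁ (sJ1 p f a J i₁) ∧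
      ∀ j' : ℤ, sCond p f a J i₁ j' → sJ1 p f a J i₁ ≤ j' := by
  rw [sJ1, dif_pos (exists_min_cond hp2 hper hstart)]
  exact (exists_min_cond hp2 hper hstart).choose_spec

lemma sJ1_eq_of (hp2 : 2 ≤ p) (hper : ∀ j : ℤ, a (j + f) = a j) [NeZero f] {i₁ j : ℤ}
    (hstart : (i₁ : ZMod f) ∈ (sigDeltaBar p f a '' J) \ J)
    (h : sCond p f a J i₁ j) (hmin : ∀ j' : ℤ, sCond p f a J i₁ j' → j ≤ j') :
    sJ1 p f a J i₁ = j := by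
  obtain ⟨h1, h2⟩ := sJ1_spec hp2 hper hstart
  exact le_antisymm (h2 j h) (hmin _ h1)

end

section
variable {p f : ℕ} {a : ℤ → ℕ} {J : Set (ZMod f)}

lemma sQ_lt [NeZero f] {b : ZMod f} {v : ℕ} (h : sQ f J b v) : v < f := by
  obtain ⟨x, -, hval⟩ := h
  rw [← hval]
  exact ZMod.val_lt _

lemma sQ_finite [NeZero f] (b : ZMod f) : (setOf (sQ f J b)).Finite := by
  have : setOf (sQ f J b) ⊆ Set.Iio f := fun v hv => sQ_lt hv
  exact (Set.finite_Iio f).subset this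

lemma sQ_card [NeZero f] (b : ZMod f) : (sQ_finite (J := J) b).toFinset.card = J.ncard := by
  rw [← Set.ncard_eq_toFinset_card _ (sQ_finite b)]
  have hset : setOf (sQ f J b) = (fun x : ZMod f => (x - b).val) '' J := rfl
  rw [hset]
  apply Set.ncard_image_of_injective
  intro x y hxy
  have h2 := ZMod.val_injective f hxy
  have h3 := congrArg (fun z => z + b) h2
  simpa using h3

lemma natCast_zmod_val [NeZero f] (x : ZMod f) : ((x.val : ℕ) : ZMod f) = x := by
  simp [ZMod.natCast_val, ZMod.cast_id]

end

section
variable {p f : ℕ} {a : ℤ → ℕ} {J : Set (ZMod f)}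

lemma sJ1_mem [NeZero f] (hp2 : 2 ≤ p) (hper : ∀ j : ℤ, a (j + f) = a j) {i₁ : ℤ}
    (hstart : (i₁ : ZMod f) ∈ (sigDeltaBar p f a '' J) \ J) :
    ((sJ1 p f a J i₁ : ℤ) : ZMod f) ∈ J := (sJ1_spec hp2 hper hstart).1.2.1

lemma sJSeq_zero [NeZero f] (hp2 : 2 ≤ p) (hper : ∀ j : ℤ, a (j + f) = a j) {i₁ : ℤ}
    (hstart : (i₁ : ZMod f) ∈ (sigDeltaBar p f a '' J) \ J) :
    sJSeq p f a J i₁ 0 = sJ1 p f a J i₁ := by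
  have h0 : sQ f J ((sJ1 p f a J i₁ : ℤ) : ZMod f) 0 :=
    ⟨_, sJ1_mem hp2 hper hstart, by simp⟩
  rw [sJSeq, Nat.nth_zero_of_zero h0]
  simp

lemma sJSeq_mono [NeZero f] {i₁ : ℤ} {κ κ' : ℕ} (h : κ < κ') (h' : κ' < J.ncard) :
    sJSeq p f a J i₁ κ < sJSeq p f a J i₁ κ' := by
  rw [sJSeq, sJSeq]
  have := Nat.nth_lt_nth_of_lt_card (sQ_finite (J := J) ((sJ1 p f a J i₁ : ℤ) : ZMod f)) h
    (lt_of_lt_of_eq h' (sQ_card (J := J) ((sJ1 p f a J i₁ : ℤ) : ZMod f)).symm)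
  omega

lemma sJSeq_nth_mem [NeZero f] {i₁ : ℤ} {κ : ℕ} (h : κ < J.ncard) :
    sQ f J ((sJ1 p f a J i₁ : ℤ) : ZMod f)
      (Nat.nth (sQ f J ((sJ1 p f a J i₁ : ℤ) : ZMod f)) κ) :=
  Nat.nth_mem_of_lt_card (sQ_finite _)
    (lt_of_lt_of_eq h (sQ_card (J := J) ((sJ1 p f a J i₁ : ℤ) : ZMod f)).symm)

lemma sJSeq_mem [NeZero f] {i₁ : ℤ} {κ : ℕ} (h : κ < J.ncard) :
    ((sJSeq p f a J i₁ κ : ℤ) : ZMod f) ∈ J := by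
  obtain ⟨x, hx, hval⟩ := sJSeq_nth_mem (p := p) (a := a) (i₁ := i₁) h
  have : ((sJSeq p f a J i₁ κ : ℤ) : ZMod f) = x := by
    rw [sJSeq]
    push_cast
    rw [← hval, natCast_zmod_val]
    ring
  rwa [this]

lemma sJSeq_lt_top [NeZero f] {i₁ : ℤ} {κ : ℕ} (h : κ < J.ncard) :
    sJSeq p f a J i₁ κ < sJ1 p f a J i₁ + f := by
  have := sQ_lt (sJSeq_nth_mem (p := p) (a := a) (i₁ := i₁) h)
  rw [sJSeq]
  omega

lemma sJSeq_ge [NeZero f] (i₁ : ℤ) (κ : ℕ) : sJ1 p f a J i₁ ≤ sJSeq p f a J i₁ κ := by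
  rw [sJSeq]; omega

lemma sJSeq_surj [NeZero f] {i₁ j : ℤ} (hmem : (j : ZMod f) ∈ J)
    (h1 : sJ1 p f a J i₁ ≤ j) (h2 : j < sJ1 p f a J i₁ + f) :
    ∃ κ : ℕ, κ < J.ncard ∧ sJSeq p f a J i₁ κ = j := by
  set b : ZMod f := ((sJ1 p f a J i₁ : ℤ) : ZMod f) with hb
  set v : ℕ := (j - sJ1 p f a J i₁).toNat with hv
  have hvf : v < f := by omega
  have hQ : sQ f J b v := by
    refine ⟨(j : ZMod f), hmem, ?_⟩
    have hcast : ((v : ℕ) : ZMod f) = ((j - sJ1 p f a J i₁ : ℤ) : ZMod f) := by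
      rw [hv, show ((((j - sJ1 p f a J i₁).toNat : ℕ)) : ZMod f)
          = (((j - sJ1 p f a J i₁).toNat : ℤ) : ZMod f) by push_cast; ring,
        Int.toNat_of_nonneg (by omega : (0:ℤ) ≤ j - sJ1 p f a J i₁)]
    have : (j : ZMod f) - b = ((v : ℕ) : ZMod f) := by
      rw [hcast, hb]
      push_cast
      ring
    rw [this, ZMod.val_cast_of_lt hvf]
  refine ⟨Nat.count (sQ f J b) v, ?_, ?_⟩
  · rw [← sQ_card (J := J) b]
    exact Nat.count_lt_card (sQ_finite b) hQ
  · rw [sJSeq, ← hb, Nat.nth_count hQ]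
    omega

end

lemma enum_unique {r : ℕ} {g g' : ℕ → ℤ}
    (hg : ∀ κ κ' : ℕ, κ < κ' → κ' < r → g κ < g κ')
    (hg' : ∀ κ κ' : ℕ, κ < κ' → κ' < r → g' κ < g' κ')
    (him : ∀ κ, κ < r → ∃ κ', κ' < r ∧ g κ = g' κ') :
    ∀ κ, κ < r → g κ = g' κ := by
  have inj2 : StrictMono (fun κ : Fin r => g' κ.val) := fun κ κ' h => hg' _ _ h κ'.isLt
  have inj1 : StrictMono (fun κ : Fin r => g κ.val) := fun κ κ' h => hg _ _ h κ'.isLt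
  set s : Finset ℤ := Finset.image (fun κ : Fin r => g' κ.val) Finset.univ with hs
  have hcard : s.card = r := by
    rw [hs, Finset.card_image_of_injective _ inj2.injective, Finset.card_univ,
      Fintype.card_fin]
  have h2 : (fun κ : Fin r => g' κ.val) = s.orderEmbOfFin hcard :=
    Finset.orderEmbOfFin_unique hcard (fun x => Finset.mem_image_of_mem _ (Finset.mem_univ x))
      inj2
  have h1 : (fun κ : Fin r => g κ.val) = s.orderEmbOfFin hcard := by
    apply Finset.orderEmbOfFin_unique hcard _ inj1
    intro x
    obtain ⟨κ', hκ', heq⟩ := him x.val x.isLt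
    rw [heq, hs]
    exact Finset.mem_image_of_mem _ (Finset.mem_univ (⟨κ', hκ'⟩ : Fin r))
  intro κ hκ
  have := congrFun (h1.trans h2.symm) (⟨κ, hκ⟩ : Fin r)
  simpa using this

section
variable {p f : ℕ} {a : ℤ → ℕ} {J : Set (ZMod f)}

lemma sJ1_SP [NeZero f] (hp2 : 2 ≤ p) (hper : ∀ j : ℤ, a (j + f) = a j) {i₁ : ℤ}
    (hstart : (i₁ : ZMod f) ∈ (sigDeltaBar p f a '' J) \ J) :
    SP p a i₁ (sJ1 p f a J i₁) := by
  obtain ⟨⟨h1, h2, h3⟩, -⟩ := sJ1_spec hp2 hper hstart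
  have := SP_of_sigDelta_lt (j := sJ1 p f a J i₁) (p := p) (a := a) (by omega)
  rwa [h3] at this

lemma norep [NeZero f] (hp2 : 2 ≤ p) (hper : ∀ j : ℤ, a (j + f) = a j) {i₁ j : ℤ}
    (hstart : (i₁ : ZMod f) ∈ (sigDeltaBar p f a '' J) \ J)
    (h1 : i₁ < j) (h2 : j < sJ1 p f a J i₁) : (j : ZMod f) ∉ J := by
  intro hmem
  have hSP : SP p a i₁ j := SP_trunc (sJ1_SP hp2 hper hstart) h1 h2.le
  have : sCond p f a J i₁ j := ⟨h1, hmem, sigDelta_eq_of_SP hp2 hSP⟩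
  have := (sJ1_spec hp2 hper hstart).2 j this
  omega

lemma sJSeq_window [NeZero f] (hp2 : 2 ≤ p) (hper : ∀ j : ℤ, a (j + f) = a j) {i₁ : ℤ}
    (hstart : (i₁ : ZMod f) ∈ (sigDeltaBar p f a '' J) \ J) {κ : ℕ} (hκ : κ < J.ncard) :
    i₁ < sJSeq p f a J i₁ κ ∧ sJSeq p f a J i₁ κ < i₁ + f := by
  have hge := sJSeq_ge (p := p) (a := a) (J := J) i₁ κ
  have hi₁ : i₁ < sJ1 p f a J i₁ := (sJ1_spec hp2 hper hstart).1.1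
  refine ⟨by omega, ?_⟩
  by_contra hcon
  push_neg at hcon
  rcases eq_or_lt_of_le hcon with heq | hlt
  · have hmem := sJSeq_mem (p := p) (a := a) (J := J) (i₁ := i₁) hκ
    rw [← heq] at hmem
    have : ((i₁ + (f : ℤ) : ℤ) : ZMod f) = (i₁ : ZMod f) := by push_cast; simp
    rw [this] at hmem
    exact hstart.2 hmem
  · have htop := sJSeq_lt_top (p := p) (a := a) (i₁ := i₁) hκ
    have hmem := sJSeq_mem (p := p) (a := a) (J := J) (i₁ := i₁) hκ
    apply norep hp2 hper hstart (j := sJSeq p f a J i₁ κ - f) (by omega) (by omega)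
    have : ((sJSeq p f a J i₁ κ - f : ℤ) : ZMod f) = ((sJSeq p f a J i₁ κ : ℤ) : ZMod f) := by
      push_cast; simp
    rwa [this]

lemma sISeq_zero (p : ℕ) (a : ℤ → ℕ) (i₁ : ℤ) : sISeq p f a J i₁ 0 = i₁ := rfl

lemma sISeq_succ (p : ℕ) (a : ℤ → ℕ) (i₁ : ℤ) (κ : ℕ) :
    sISeq p f a J i₁ (κ + 1) =
      if sISeq p f a J i₁ κ < sigDelta p a (sJSeq p f a J i₁ (κ + 1))
      then sigDelta p a (sJSeq p f a J i₁ (κ + 1)) else sJSeq p f a J i₁ (κ + 1) := rfl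

lemma sISeq_le [NeZero f] (hp2 : 2 ≤ p) (hper : ∀ j : ℤ, a (j + f) = a j) {i₁ : ℤ}
    (hstart : (i₁ : ZMod f) ∈ (sigDeltaBar p f a '' J) \ J) (κ : ℕ) :
    sISeq p f a J i₁ κ ≤ sJSeq p f a J i₁ κ := by
  cases κ with
  | zero =>
    rw [sISeq_zero, sJSeq_zero hp2 hper hstart]
    exact ((sJ1_spec hp2 hper hstart).1.1).le
  | succ κ' =>
    rw [sISeq_succ]
    split
    · exact sigDelta_le _
    · exact le_refl _

lemma sISeq_lt_top [NeZero f] (hp2 : 2 ≤ p) (hper : ∀ j : ℤ, a (j + f) = a j) {i₁ : ℤ}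
    (hstart : (i₁ : ZMod f) ∈ (sigDeltaBar p f a '' J) \ J) {κ : ℕ} (hκ : κ < J.ncard) :
    sISeq p f a J i₁ κ < i₁ + f := by
  have h1 := sISeq_le hp2 hper hstart (κ := κ)
  have h2 := (sJSeq_window hp2 hper hstart hκ).2
  omega

end

section
variable {p f : ℕ} {a : ℤ → ℕ} {J : Set (ZMod f)}

lemma intCast_add_mul (x k : ℤ) : ((x + k * f : ℤ) : ZMod f) = (x : ZMod f) := by
  push_cast
  simp

lemma sJ1_shift [NeZero f] (hp2 : 2 ≤ p) (hper : ∀ j : ℤ, a (j + f) = a j) {i₁ : ℤ} (k : ℤ)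
    (hstart : (i₁ : ZMod f) ∈ (sigDeltaBar p f a '' J) \ J) :
    sJ1 p f a J (i₁ + k * f) = sJ1 p f a J i₁ + k * f := by
  have hstart' : ((i₁ + k * f : ℤ) : ZMod f) ∈ (sigDeltaBar p f a '' J) \ J := by
    rwa [intCast_add_mul]
  obtain ⟨⟨h1, h2, h3⟩, hmin⟩ := sJ1_spec hp2 hper hstart
  apply sJ1_eq_of hp2 hper hstart'
  · refine ⟨by omega, ?_, ?_⟩
    · rwa [intCast_add_mul]
    · rw [sigDelta_shift hp2 hper, h3]
  · rintro j' ⟨g1, g2, g3⟩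
    have : sCond p f a J i₁ (j' - k * f) := by
      refine ⟨by omega, ?_, ?_⟩
      · rw [show j' - k * f = j' + (-k) * f by ring, intCast_add_mul]
        exact g2
      · rw [show j' - k * f = j' + (-k) * f by ring, sigDelta_shift hp2 hper, neg_mul]
        omega
    have := hmin _ this
    omega

lemma sJSeq_shift [NeZero f] (hp2 : 2 ≤ p) (hper : ∀ j : ℤ, a (j + f) = a j) {i₁ : ℤ} (k : ℤ)
    (hstart : (i₁ : ZMod f) ∈ (sigDeltaBar p f a '' J) \ J) (κ : ℕ) :
    sJSeq p f a J (i₁ + k * f) κ = sJSeq p f a J i₁ κ + k * f := by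
  rw [sJSeq, sJSeq, sJ1_shift hp2 hper k hstart, intCast_add_mul]
  ring

lemma sISeq_shift [NeZero f] (hp2 : 2 ≤ p) (hper : ∀ j : ℤ, a (j + f) = a j) {i₁ : ℤ} (k : ℤ)
    (hstart : (i₁ : ZMod f) ∈ (sigDeltaBar p f a '' J) \ J) (κ : ℕ) :
    sISeq p f a J (i₁ + k * f) κ = sISeq p f a J i₁ κ + k * f := by
  induction κ with
  | zero => rw [sISeq_zero, sISeq_zero]
  | succ κ' ih =>
    rw [sISeq_succ, sISeq_succ, ih, sJSeq_shift hp2 hper k hstart,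
      sigDelta_shift hp2 hper]
    split <;> split <;> omega

lemma sigMuFrom_shift [NeZero f] (hp2 : 2 ≤ p) (hper : ∀ j : ℤ, a (j + f) = a j) {i₁ : ℤ}
    (k : ℤ) (hstart : (i₁ : ZMod f) ∈ (sigDeltaBar p f a '' J) \ J) :
    sigMuFrom p f a J (i₁ + k * f) = sigMuFrom p f a J i₁ := by
  rw [sigMuFrom_eq, sigMuFrom_eq]
  ext y
  simp only [Set.mem_setOf_eq]
  constructor
  · rintro ⟨κ, hκ, rfl⟩
    exact ⟨κ, hκ, by rw [sISeq_shift hp2 hper k hstart, intCast_add_mul]⟩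
  · rintro ⟨κ, hκ, rfl⟩
    exact ⟨κ, hκ, by rw [sISeq_shift hp2 hper k hstart, intCast_add_mul]⟩

end

section
variable {p f : ℕ} {a : ℤ → ℕ} {J : Set (ZMod f)}

lemma sigMuFrom_swap [NeZero f] (hp2 : 2 ≤ p) (hper : ∀ j : ℤ, a (j + f) = a j) {i₁ i₁' : ℤ}
    (hstart : (i₁ : ZMod f) ∈ (sigDeltaBar p f a '' J) \ J)
    (hstart' : (i₁' : ZMod f) ∈ (sigDeltaBar p f a '' J) \ J)
    (hlt : i₁ < i₁') (hlt2 : i₁' < i₁ + f) :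
    sigMuFrom p f a J i₁' = sigMuFrom p f a J i₁ := by
  have hf0 : 0 < f := Nat.pos_of_ne_zero (NeZero.ne f)
  obtain ⟨⟨hi₁lt, hc1mem, hc1δ⟩, hc1min⟩ := sJ1_spec hp2 hper hstart
  obtain ⟨⟨hi₁lt', hc1mem', hc1δ'⟩, hc1min'⟩ := sJ1_spec hp2 hper hstart'
  set r := J.ncard with hr
  -- r ≥ 1
  have hJne : J.Nonempty := by
    obtain ⟨⟨x, hx, -⟩, -⟩ := hstart
    exact ⟨x, hx⟩
  have hrpos : 0 < r := by
    rw [hr, Set.ncard_pos (Set.toFinite J)]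
    exact hJne
  -- c1 ≤ c1' < c1 + f
  have hc1le : sJ1 p f a J i₁ ≤ sJ1 p f a J i₁' := by
    by_contra hcon
    push_neg at hcon
    exact norep hp2 hper hstart (by omega) hcon hc1mem'
  have hc1f : sJ1 p f a J i₁' < sJ1 p f a J i₁ + f := by
    rcases lt_trichotomy (sJ1 p f a J i₁') (sJ1 p f a J i₁ + f) with h | h | h
    · exact h
    · exfalso
      have : sigDelta p a (sJ1 p f a J i₁ + f) = i₁ + f := by
        rw [show sJ1 p f a J i₁ + (f : ℤ) = sJ1 p f a J i₁ + 1 * f by ring,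
          sigDelta_shift hp2 hper, hc1δ]
        ring
      rw [← h, hc1δ'] at this
      omega
    · exfalso
      apply norep hp2 hper hstart' (j := sJ1 p f a J i₁ + f) (by omega) h
      rw [show sJ1 p f a J i₁ + (f : ℤ) = sJ1 p f a J i₁ + 1 * f by ring, intCast_add_mul]
      exact hc1mem
  -- m
  obtain ⟨m, hmr, hjm⟩ := sJSeq_surj (p := p) (a := a) (i₁ := i₁) hc1mem' hc1le hc1f
  have hm1 : 1 ≤ m := by
    rcases Nat.eq_zero_or_pos m with h | h
    · exfalso
      rw [h, sJSeq_zero hp2 hper hstart] at hjm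
      rw [hjm] at hc1δ
      omega
    · exact h
  have hlow : ∀ κ : ℕ, κ < m → sJSeq p f a J i₁ κ < i₁' := by
    intro κ hκ
    have h1 : sJSeq p f a J i₁ κ < sJ1 p f a J i₁' := by
      rw [← hjm]
      exact sJSeq_mono hκ hmr
    rcases lt_trichotomy (sJSeq p f a J i₁ κ) i₁' with h | h | h
    · exact h
    · exfalso
      have := sJSeq_mem (p := p) (a := a) (J := J) (i₁ := i₁) (Nat.lt_of_lt_of_le hκ hmr.le)
      rw [h] at this
      exact hstart'.2 this
    · exfalso
      exact norep hp2 hper hstart' h h1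
        (sJSeq_mem (p := p) (a := a) (J := J) (i₁ := i₁) (Nat.lt_of_lt_of_le hκ hmr.le))
  -- the relation between the two j-sequences
  have hgeq : ∀ κ : ℕ, κ < r →
      (if κ < r - m then sJSeq p f a J i₁ (m + κ) else sJSeq p f a J i₁ (κ - (r - m)) + f)
        = sJSeq p f a J i₁' κ := by
    apply enum_unique
    · -- strict mono of g
      intro κ κ' hκκ' hκ'
      split <;> split
      · exact sJSeq_mono (J := J) (i₁ := i₁) (by omega) (by omega)
      · have h1 := (sJSeq_window (J := J) hp2 hper hstart (κ := m + κ) (by omega)).2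
        have h2 := (sJSeq_window (J := J) hp2 hper hstart (κ := κ' - (r - m)) (by omega)).1
        omega
      · omega
      · have := sJSeq_mono (p := p) (a := a) (J := J) (i₁ := i₁)
          (κ := κ - (r - m)) (κ' := κ' - (r - m)) (by omega) (by omega)
        omega
    · intro κ κ' hκκ' hκ'
      exact sJSeq_mono hκκ' hκ'
    · intro κ hκ
      split
      · rename_i hcase
        have hmem := sJSeq_mem (p := p) (a := a) (J := J) (i₁ := i₁) (κ := m + κ) (by omega)
        have hge : sJ1 p f a J i₁' ≤ sJSeq p f a J i₁ (m + κ) := by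
          rw [← hjm]
          rcases Nat.eq_zero_or_pos κ with h0 | h0
          · subst h0
            simp
          · exact (sJSeq_mono (J := J) (i₁ := i₁) (by omega) (by omega)).le
        have htop : sJSeq p f a J i₁ (m + κ) < sJ1 p f a J i₁' + f := by
          have h1 := (sJSeq_window (J := J) hp2 hper hstart (κ := m + κ) (by omega)).2
          omega
        obtain ⟨κ', hκ', heq⟩ := sJSeq_surj (p := p) (a := a) (J := J) (i₁ := i₁') hmem hge htop
        exact ⟨κ', hκ', heq.symm⟩
      · rename_i hcase
        have hmem : ((sJSeq p f a J i₁ (κ - (r - m)) + f : ℤ) : ZMod f) ∈ J := by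
          rw [show sJSeq p f a J i₁ (κ - (r - m)) + (f:ℤ)
            = sJSeq p f a J i₁ (κ - (r - m)) + 1 * f by ring, intCast_add_mul]
          exact sJSeq_mem (p := p) (a := a) (J := J) (i₁ := i₁) (by omega)
        have hge : sJ1 p f a J i₁' ≤ sJSeq p f a J i₁ (κ - (r - m)) + f := by
          have := sJSeq_ge (p := p) (a := a) (J := J) i₁ (κ - (r - m))
          omega
        have htop : sJSeq p f a J i₁ (κ - (r - m)) + f < sJ1 p f a J i₁' + f := by
          have := hlow (κ - (r - m)) (by omega)
          omega
        obtain ⟨κ', hκ', heq⟩ := sJSeq_surj (p := p) (a := a) (J := J) (i₁ := i₁') hmem hge htop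
        exact ⟨κ', hκ', heq.symm⟩
  -- synchronization of the i-sequences, part 1
  have hδm : sigDelta p a (sJSeq p f a J i₁ m) = i₁' := by rw [hjm]; exact hc1δ'
  have hI1 : ∀ κ : ℕ, κ < r - m → sISeq p f a J i₁' κ = sISeq p f a J i₁ (m + κ) := by
    intro κ
    induction κ with
    | zero =>
      intro hκ0
      obtain ⟨m', rfl⟩ : ∃ m', m = m' + 1 := ⟨m - 1, by omega⟩
      rw [Nat.add_zero, sISeq_zero, sISeq_succ, hδm]
      have h1 := sISeq_le hp2 hper hstart m'
      have h2 := hlow m' (by omega)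
      rw [if_pos (by omega)]
    | succ κ' ih =>
      intro hκ1
      have ihv := ih (by omega)
      have hjrel : sJSeq p f a J i₁' (κ' + 1) = sJSeq p f a J i₁ (m + (κ' + 1)) := by
        have := hgeq (κ' + 1) (by omega)
        rw [if_pos (by omega)] at this
        rw [← this]
      rw [sISeq_succ, ihv, hjrel, show m + (κ' + 1) = (m + κ') + 1 by ring, sISeq_succ]
  -- synchronization of the i-sequences, part 2
  have hI2 : ∀ κ : ℕ, r - m ≤ κ → κ < r → sISeq p f a J i₁' κ = sISeq p f a J i₁ (κ - (r - m)) + f := by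
    intro κ
    induction κ with
    | zero => intro h1 h2; omega
    | succ κ' ih =>
      intro h1 h2
      rcases Nat.lt_or_ge κ' (r - m) with hcase | hcase
      · -- base case: κ' + 1 = r - m
        have hκeq : κ' + 1 = r - m := by omega
        have hjrel : sJSeq p f a J i₁' (κ' + 1) = sJSeq p f a J i₁ 0 + f := by
          have := hgeq (κ' + 1) (by omega)
          rw [if_neg (by omega)] at this
          rw [← this, hκeq, Nat.sub_self]
        have hδ0 : sigDelta p a (sJSeq p f a J i₁ 0 + f) = i₁ + f := by
          rw [show sJSeq p f a J i₁ 0 + (f:ℤ) = sJSeq p f a J i₁ 0 + 1 * f by ring,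
            sigDelta_shift hp2 hper, sJSeq_zero hp2 hper hstart, hc1δ]
          ring
        have hprev : sISeq p f a J i₁' κ' < i₁ + f := by
          rw [hI1 κ' (by omega)]
          exact sISeq_lt_top hp2 hper hstart (by omega)
        rw [sISeq_succ, hjrel, hδ0, if_pos (by omega), hκeq, Nat.sub_self, sISeq_zero]
      · -- inductive step
        have ihv := ih hcase (by omega)
        have hjrel : sJSeq p f a J i₁' (κ' + 1)
            = sJSeq p f a J i₁ ((κ' - (r - m)) + 1) + f := by
          have := hgeq (κ' + 1) (by omega)
          rw [if_neg (by omega)] at this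
          rw [← this, show κ' + 1 - (r - m) = (κ' - (r - m)) + 1 by omega]
        have hδrel : sigDelta p a (sJSeq p f a J i₁ ((κ' - (r - m)) + 1) + f)
            = sigDelta p a (sJSeq p f a J i₁ ((κ' - (r - m)) + 1)) + f := by
          rw [show sJSeq p f a J i₁ ((κ' - (r - m)) + 1) + (f:ℤ)
            = sJSeq p f a J i₁ ((κ' - (r - m)) + 1) + 1 * f by ring,
            sigDelta_shift hp2 hper]
          ring
        rw [sISeq_succ, hjrel, hδrel, ihv,
          show κ' + 1 - (r - m) = (κ' - (r - m)) + 1 by omega, sISeq_succ]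
        split <;> split <;> omega
  -- conclusion
  rw [sigMuFrom_eq, sigMuFrom_eq]
  ext y
  simp only [Set.mem_setOf_eq, ← hr]
  constructor
  · rintro ⟨κ, hκ, rfl⟩
    rcases Nat.lt_or_ge κ (r - m) with hcase | hcase
    · exact ⟨m + κ, by omega, by rw [hI1 κ hcase]⟩
    · refine ⟨κ - (r - m), by omega, ?_⟩
      rw [hI2 κ hcase hκ,
        show sISeq p f a J i₁ (κ - (r - m)) + (f:ℤ)
          = sISeq p f a J i₁ (κ - (r - m)) + 1 * f by ring, intCast_add_mul]
  · rintro ⟨κ, hκ, rfl⟩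
    rcases Nat.lt_or_ge κ m with hcase | hcase
    · refine ⟨κ + (r - m), by omega, ?_⟩
      rw [hI2 (κ + (r - m)) (by omega) (by omega), Nat.add_sub_cancel,
        show sISeq p f a J i₁ κ + (f:ℤ) = sISeq p f a J i₁ κ + 1 * f by ring,
        intCast_add_mul]
    · exact ⟨κ - m, by omega, by rw [hI1 (κ - m) (by omega), Nat.add_sub_cancel' hcase]⟩

end

/-- If `δ(J) ⊄ J`, the set `μ(J) = {[i_1], …, [i_r]}` produced by the construction
is independent of the choice of the initial element `[i₁] ∈ δ(J) ∖ J`. -/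
theorem sigMuFrom_independent_of_choice (p f : ℕ) (a : ℤ → ℕ) (hp : p.Prime)
    (hsig : IsTameSignature p f a) (J : Set (ZMod f))
    (hJ : ¬ sigDeltaBar p f a '' J ⊆ J) (i₁ i₁' : ℤ)
    (h₁ : (i₁ : ZMod f) ∈ (sigDeltaBar p f a '' J) \ J)
    (h₁' : (i₁' : ZMod f) ∈ (sigDeltaBar p f a '' J) \ J) :
    sigMuFrom p f a J i₁ = sigMuFrom p f a J i₁' := by
  have hf0 : 0 < f := hsig.1
  haveI : NeZero f := ⟨hf0.ne'⟩
  have hp2 : 2 ≤ p := hp.two_le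
  have hper := hsig.2.1
  set e : ℤ := (i₁' - i₁) % f with he
  set q : ℤ := (i₁' - i₁) / f with hqdef
  have hq : i₁' - i₁ = q * f + e := by
    have := (Int.mul_ediv_add_emod (i₁' - i₁) f).symm
    rw [mul_comm] at this
    exact this
  have he0 : 0 ≤ e := Int.emod_nonneg _ (by exact_mod_cast hf0.ne')
  have hef : e < f := Int.emod_lt_of_pos _ (by exact_mod_cast hf0)
  rcases eq_or_lt_of_le he0 with hzero | hpos
  · -- same class
    have : i₁' = i₁ + q * f := by omega
    rw [this, sigMuFrom_shift hp2 hper _ h₁]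
  · -- different class
    have hii : i₁ + e = i₁' + (-q) * f := by rw [neg_mul]; omega
    have hstart'' : ((i₁ + e : ℤ) : ZMod f) ∈ (sigDeltaBar p f a '' J) \ J := by
      rw [hii, intCast_add_mul]
      exact h₁'
    have h2 : sigMuFrom p f a J (i₁' + (-q) * f) = sigMuFrom p f a J i₁' :=
      sigMuFrom_shift hp2 hper _ h₁'
    have h3 : sigMuFrom p f a J (i₁ + e) = sigMuFrom p f a J i₁ :=
      sigMuFrom_swap hp2 hper h₁ hstart'' (by omega) (by omega)
    rw [← h3, hii, h2]
end

section
/- Let (a_0, …, a_{f−1}) be a tame signature for a prime p and integer f ≥ 1, and let R be the set of j ∈ {0, …, f−1} such that a_j ≠ p−1 and (a_i, a_{i+1}, …, a_{j−1}) = (p, p−1, …, p−1) for some i with j − f ≤ i < j (i.e., a_i = p and a_{i+1} = ⋯ = a_{j−1} = p−1). Then the cardinality of R equals the cardinality of {i ∈ {0, …, f−1} : a_i = p}. -/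
open scoped Classical

/-- The smallest index `> i` at which `a` differs from `p - 1` (when it exists). -/
noncomputable def nextIdx (p : ℕ) (a : ℤ → ℕ) (i : ℤ) : ℤ :=
  if h : ∃ n : ℕ, a (i + 1 + n) ≠ p - 1 then i + 1 + Nat.find h else i

lemma nextIdx_spec (p : ℕ) (a : ℤ → ℕ) (i : ℤ) (h : ∃ n : ℕ, a (i + 1 + n) ≠ p - 1) :
    i < nextIdx p a i ∧ a (nextIdx p a i) ≠ p - 1 ∧
      ∀ m : ℤ, i < m → m < nextIdx p a i → a m = p - 1 := by
  rw [nextIdx, dif_pos h]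
  have hnn : (0 : ℤ) ≤ (Nat.find h : ℤ) := Int.ofNat_nonneg _
  refine ⟨by omega, Nat.find_spec h, ?_⟩
  · intro m h1 h2
    have hk : ((m - i - 1).toNat : ℤ) = m - i - 1 := by omega
    have hlt : (m - i - 1).toNat < Nat.find h := by omega
    have := Nat.find_min h hlt
    rw [not_not] at this
    have he : i + 1 + ((m - i - 1).toNat : ℤ) = m := by omega
    rwa [he] at this

/-- Let `(a_0,…,a_{f−1})` be a tame signature and let `R` be the set of
`j ∈ {0,…,f−1}` such that `a_j ≠ p−1` and `(a_i, a_{i+1}, …, a_{j−1}) = (p, p−1, …, p−1)`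
for some `i` with `j − f ≤ i < j` (i.e. `a_i = p` and `a_{i+1} = ⋯ = a_{j−1} = p−1`).
Then `#R = #{i ∈ {0,…,f−1} : a_i = p}`. -/
theorem card_R_eq_card_p (p f : ℕ) (a : ℤ → ℕ) (hp : p.Prime)
    (hsig : IsTameSignature p f a) :
    ((Finset.Icc (0 : ℤ) ((f : ℤ) - 1)).filter fun j =>
        a j ≠ p - 1 ∧ ∃ i : ℤ, j - (f : ℤ) ≤ i ∧ i < j ∧ a i = p ∧
          ∀ m : ℤ, i < m → m < j → a m = p - 1).card =
      ((Finset.Icc (0 : ℤ) ((f : ℤ) - 1)).filter fun i => a i = p).card := by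
  obtain ⟨hf, hper, hbd, -⟩ := hsig
  have hp2 : 2 ≤ p := hp.two_le
  have hfz : (f : ℤ) ≠ 0 := by exact_mod_cast hf.ne'
  have hfpos : (0 : ℤ) < f := by exact_mod_cast hf
  -- periodicity with any integer multiple of f
  have hperk : ∀ (k j : ℤ), a (j + k * f) = a j := by
    intro k
    induction k using Int.induction_on with
    | zero => simp
    | succ k ih =>
        intro j
        have e : j + ((k : ℤ) + 1) * f = (j + k * f) + f := by ring
        rw [e, hper, ih]
    | pred k ih =>
        intro j
        have e : j + (-(k : ℤ)) * f = (j + (-(k : ℤ) - 1) * f) + f := by ring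
        have := ih j
        rw [e, hper] at this
        exact this
  have hmod : ∀ j : ℤ, a (j % f) = a j := by
    intro j
    have e : j % (f : ℤ) = j + (-(j / f)) * f := by
      rw [Int.emod_def]; ring
    rw [e, hperk]
  -- existence of a next index for any i with a i = p
  have hex : ∀ i : ℤ, a i = p → ∃ n : ℕ, a (i + 1 + n) ≠ p - 1 := by
    intro i hi
    refine ⟨f - 1, ?_⟩
    have e : i + 1 + ((f - 1 : ℕ) : ℤ) = i + f := by
      push_cast [Nat.cast_sub hf]; ring
    rw [e, hper, hi]; omega
  -- uniqueness of next index
  have huniq : ∀ i j1 j2 : ℤ, i < j1 → a j1 ≠ p - 1 →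
      (∀ m : ℤ, i < m → m < j1 → a m = p - 1) → i < j2 → a j2 ≠ p - 1 →
      (∀ m : ℤ, i < m → m < j2 → a m = p - 1) → j1 = j2 := by
    intro i j1 j2 h1 h2 h3 h4 h5 h6
    rcases lt_trichotomy j1 j2 with h | h | h
    · exact absurd (h6 j1 h1 h) h2
    · exact h
    · exact absurd (h3 j2 h4 h) h5
  -- bound on the next index
  have hbound : ∀ i : ℤ, a i = p → nextIdx p a i ≤ i + f := by
    intro i hi
    obtain ⟨hs1, hs2, hs3⟩ := nextIdx_spec p a i (hex i hi)
    by_contra hc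
    push_neg at hc
    have := hs3 (i + f) (by omega) hc
    rw [hper, hi] at this
    omega
  symm
  refine Finset.card_bij (fun i _ => nextIdx p a i % f) ?_ ?_ ?_
  · -- maps into R
    intro i hi
    beta_reduce
    rw [Finset.mem_filter, Finset.mem_Icc] at hi
    obtain ⟨⟨hi0, hi1⟩, hai⟩ := hi
    obtain ⟨hs1, hs2, hs3⟩ := nextIdx_spec p a i (hex i hai)
    set j0 := nextIdx p a i with hj0
    set q := j0 / (f : ℤ) with hq
    have hqe : j0 % (f : ℤ) = j0 - q * f := by rw [Int.emod_def]; ring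
    rw [Finset.mem_filter, Finset.mem_Icc]
    refine ⟨⟨Int.emod_nonneg _ hfz, by have := Int.emod_lt_of_pos j0 hfpos; omega⟩, ?_, ?_⟩
    · rw [hmod]; exact hs2
    · refine ⟨i - q * f, by have := hbound i hai; omega, by omega, ?_, ?_⟩
      · have e : i - q * (f : ℤ) = i + (-q) * f := by ring
        rw [e, hperk]; exact hai
      · intro m hm1 hm2
        have := hs3 (m + q * f) (by omega) (by omega)
        rwa [hperk] at this
  · -- injective
    intro i1 hi1 i2 hi2 heq
    rw [Finset.mem_filter, Finset.mem_Icc] at hi1 hi2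
    obtain ⟨⟨h10, h11⟩, ha1⟩ := hi1
    obtain ⟨⟨h20, h21⟩, ha2⟩ := hi2
    have key : ∀ i1 i2 : ℤ, 0 ≤ i1 → i2 ≤ (f : ℤ) - 1 → i1 < i2 → a i1 = p → a i2 = p →
        nextIdx p a i1 % f = nextIdx p a i2 % f → False := by
      clear heq ha1 ha2 h10 h11 h20 h21
      intro i1 i2 h10 h21 hlt ha1 ha2 heq
      obtain ⟨hs1, hs2, hs3⟩ := nextIdx_spec p a i1 (hex i1 ha1)
      obtain ⟨ht1, ht2, ht3⟩ := nextIdx_spec p a i2 (hex i2 ha2)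
      set j1 := nextIdx p a i1
      set j2 := nextIdx p a i2
      have hj1le : j1 ≤ i2 := by
        by_contra hc
        push_neg at hc
        have := hs3 i2 hlt hc
        omega
      have hdvd : (f : ℤ) ∣ j2 - j1 := by
        rw [Int.emod_eq_emod_iff_emod_sub_eq_zero] at heq
        exact dvd_sub_comm.mp (Int.dvd_of_emod_eq_zero heq)
      obtain ⟨k, hk⟩ := hdvd
      have hb1 : j1 ≤ i1 + f := hbound i1 ha1
      have hb2 : j2 ≤ i2 + f := hbound i2 ha2
      have hkpos : 0 < k := by nlinarith
      have hklt : k < 2 := by nlinarith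
      have hj2 : j2 = j1 + f := by
        have hk1 : k = 1 := by omega
        rw [hk1, mul_one] at hk
        omega
      have := ht3 (i1 + f) (by omega) (by omega)
      rw [hper, ha1] at this
      omega
    rcases lt_trichotomy i1 i2 with h | h | h
    · exact absurd heq (fun he => key i1 i2 h10 h21 h ha1 ha2 he)
    · exact h
    · exact absurd heq.symm (fun he => key i2 i1 h20 h11 h ha2 ha1 he)
  · -- surjective
    intro j hj
    rw [Finset.mem_filter, Finset.mem_Icc] at hj
    obtain ⟨⟨hj0, hj1⟩, haj, i, hif, hij, hai, hrun⟩ := hj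
    set q := i / (f : ℤ) with hq
    have hqe : i % (f : ℤ) = i - q * f := by rw [Int.emod_def]; ring
    have hai' : a (i % f) = p := by rw [hmod]; exact hai
    refine ⟨i % f, ?_, ?_⟩
    · rw [Finset.mem_filter, Finset.mem_Icc]
      exact ⟨⟨Int.emod_nonneg _ hfz, by have := Int.emod_lt_of_pos i hfpos; omega⟩, hai'⟩
    · beta_reduce
      obtain ⟨hs1, hs2, hs3⟩ := nextIdx_spec p a (i % f) (hex _ hai')
      have hnext : nextIdx p a (i % f) = j - q * f := by
        refine huniq (i % f) _ _ hs1 hs2 hs3 (by omega) ?_ ?_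
        · have e : j - q * (f : ℤ) = j + (-q) * f := by ring
          rw [e, hperk]; exact haj
        · intro m hm1 hm2
          have := hrun (m + q * f) (by omega) (by omega)
          rwa [hperk] at this
      rw [hnext]
      have : (j - q * (f : ℤ)) % f = j % f := by
        conv_rhs => rw [show j = (j - q * f) + q * f by ring]
        rw [Int.add_mul_emod_self_right]
      rw [this, Int.emod_eq_of_lt hj0 (by omega)]
end

section
/- Let (a_0, …, a_{f−1}) be a tame signature for a prime p and integer f ≥ 1, and let i be an integer with a_{i+1} = p. Let s ∈ {1, …, f} be minimal such that a_{i+s+1} ≠ p−1 (so a_{i+2} = ⋯ = a_{i+s} = p−1; such s exists since a_{i+f+1} = p ≠ p−1). Then the number of t ∈ {1, …, f−1} such that ([i], [i+t]) is a dependent pair equals s, unless (a_{i+2}, …, a_{i+s}, a_{i+s+1}, …, a_{i+f+1}) = (p−1, …, p−1, p, …, p) (i.e., a_{i+s+1} = ⋯ = a_{i+f+1} = p), in which case it equals s − 1. -/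
open scoped Classical

private lemma per_int {f : ℕ} {a : ℤ → ℕ} (h : ∀ j : ℤ, a (j + f) = a j) :
    ∀ k j : ℤ, a (j + k * f) = a j := by
  intro k
  induction k using Int.induction_on with
  | zero => intro j; simp
  | succ k ih =>
      intro j
      have e : j + ((k : ℤ) + 1) * f = (j + k * f) + f := by ring
      rw [e, h, ih]
  | pred k ih =>
      intro j
      have e : j + (-(k : ℤ) - 1) * f + f = j + (-(k : ℤ)) * f := by ring
      have := h (j + (-(k : ℤ) - 1) * f)
      rw [e] at this
      rw [← this]
      exact ih j

private lemma dep_iff (p f : ℕ) (a : ℤ → ℕ) (hf : 0 < f)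
    (hper : ∀ j : ℤ, a (j + f) = a j) (i t : ℤ) (ht1 : 1 ≤ t) (ht2 : t ≤ (f : ℤ) - 1) :
    IsDependentPair p f a (i : ZMod f) ((i + t : ℤ) : ZMod f) ↔
      (a (i + 1) = p ∧ a (i + t + 1) ≠ p ∧ ∃ s : ℤ, 1 ≤ s ∧ s ≤ t ∧
        (∀ m : ℤ, i + 2 ≤ m → m ≤ i + s → a m = p - 1) ∧
        (∀ m : ℤ, i + s + 1 ≤ m → m ≤ i + t → a m = p)) := by
  have hf1 : (1 : ℤ) ≤ (f : ℤ) := by exact_mod_cast hf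
  constructor
  · rintro ⟨i', t', ht'1, ht'2, hx, hy, h1, h2, s', hs'1, hs'2, hc1, hc2⟩
    have hd1 : (f : ℤ) ∣ i' - i := ((ZMod.intCast_eq_intCast_iff _ _ _).mp hx).dvd
    have hd2 : (f : ℤ) ∣ (i' + t') - (i + t) := ((ZMod.intCast_eq_intCast_iff _ _ _).mp hy).dvd
    obtain ⟨k, hk⟩ := hd1
    obtain ⟨k2, hk2⟩ := hd2
    have h3 : t' - t = (f : ℤ) * (k2 - k) := by
      have : (f : ℤ) * (k2 - k) = (f : ℤ) * k2 - (f : ℤ) * k := by ring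
      rw [this, ← hk, ← hk2]; ring
    have htt : t' = t := by
      rcases lt_trichotomy (k2 - k) 0 with h | h | h
      · have : (f : ℤ) * (k2 - k) ≤ (f : ℤ) * (-1) :=
          mul_le_mul_of_nonneg_left (by omega) (by linarith)
        have hneg : (f : ℤ) * (-1) = -(f : ℤ) := by ring
        linarith
      · rw [h, mul_zero] at h3; linarith
      · have : (f : ℤ) * 1 ≤ (f : ℤ) * (k2 - k) :=
          mul_le_mul_of_nonneg_left (by omega) (by linarith)
        have hpos : (f : ℤ) * 1 = (f : ℤ) := by ring
        linarith
    subst htt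
    have hi' : i' = i + k * (f : ℤ) := by
      have : k * (f : ℤ) = (f : ℤ) * k := mul_comm _ _
      linarith
    have key : ∀ x : ℤ, a (i' + x) = a (i + x) := by
      intro x
      have e : i' + x = (i + x) + k * f := by rw [hi']; ring
      rw [e, per_int hper k (i + x)]
    refine ⟨by rw [← key 1]; exact h1, ?_, s', hs'1, hs'2, ?_, ?_⟩
    · have e : i + t' + 1 = i + (t' + 1) := by ring
      have e' : i' + (t' + 1) = i' + t' + 1 := by ring
      rw [e, ← key (t' + 1), e']
      exact h2
    · intro m hm1 hm2
      have := hc1 (m + k * f) (by rw [hi'] at *; linarith) (by rw [hi'] at *; linarith)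
      rwa [per_int hper k m] at this
    · intro m hm1 hm2
      have := hc2 (m + k * f) (by rw [hi'] at *; linarith) (by rw [hi'] at *; linarith)
      rwa [per_int hper k m] at this
  · rintro ⟨h1, h2, s', hs'1, hs'2, hc1, hc2⟩
    exact ⟨i, t, ht1, ht2, rfl, rfl, h1, h2, s', hs'1, hs'2, hc1, hc2⟩

/-- Let `(a_0,…,a_{f−1})` be a tame signature, `i` an integer with `a_{i+1} = p`, and
`s ∈ {1,…,f}` minimal such that `a_{i+s+1} ≠ p−1` (so `a_{i+2} = ⋯ = a_{i+s} = p−1`).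
Then the number of `t ∈ {1,…,f−1}` such that `([i],[i+t])` is a dependent pair equals
`s`, unless `a_{i+s+1} = ⋯ = a_{i+f+1} = p`, in which case it equals `s − 1`. -/
theorem count_dependent_pairs (p f : ℕ) (a : ℤ → ℕ) (hp : p.Prime)
    (hsig : IsTameSignature p f a) (i s : ℤ)
    (hi : a (i + 1) = p) (hs1 : 1 ≤ s) (hsf : s ≤ (f : ℤ))
    (hchain : ∀ m : ℤ, 2 ≤ m → m ≤ s → a (i + m) = p - 1)
    (hstop : a (i + s + 1) ≠ p - 1) :
    ((((Finset.Icc (1 : ℤ) ((f : ℤ) - 1)).filter fun t =>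
        IsDependentPair p f a (i : ZMod f) ((i + t : ℤ) : ZMod f)).card : ℤ)) =
      if ∀ m : ℤ, s + 1 ≤ m → m ≤ (f : ℤ) + 1 → a (i + m) = p then s - 1 else s := by
  obtain ⟨hf, hper, hbd, -⟩ := hsig
  have hp2 : 2 ≤ p := hp.two_le
  have hne : p - 1 ≠ p := by omega
  have hf1 : (1 : ℤ) ≤ (f : ℤ) := by exact_mod_cast hf
  have hfp : a (i + ((f : ℤ) + 1)) = p := by
    have e : i + ((f : ℤ) + 1) = (i + 1) + (f : ℤ) := by ring
    rw [e, hper, hi]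
  -- a small-t membership lemma
  have hsmall : ∀ t : ℤ, 1 ≤ t → t ≤ s - 1 →
      IsDependentPair p f a (i : ZMod f) ((i + t : ℤ) : ZMod f) := by
    intro t ht1 hts
    rw [dep_iff p f a hf hper i t ht1 (by omega)]
    refine ⟨hi, ?_, t, ht1, le_refl t, ?_, ?_⟩
    · have e : i + t + 1 = i + (t + 1) := by ring
      rw [e, hchain (t + 1) (by omega) (by omega)]
      exact hne
    · intro m hm1 hm2
      have e : m = i + (m - i) := by ring
      rw [e]; exact hchain (m - i) (by omega) (by omega)
    · intro m hm1 hm2; omega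
  by_cases hC : ∀ m : ℤ, s + 1 ≤ m → m ≤ (f : ℤ) + 1 → a (i + m) = p
  · rw [if_pos hC]
    have hset : ((Finset.Icc (1 : ℤ) ((f : ℤ) - 1)).filter fun t =>
        IsDependentPair p f a (i : ZMod f) ((i + t : ℤ) : ZMod f)) = Finset.Icc 1 (s - 1) := by
      ext t
      simp only [Finset.mem_filter, Finset.mem_Icc]
      constructor
      · rintro ⟨⟨ht1, ht2⟩, hdep⟩
        rw [dep_iff p f a hf hper i t ht1 ht2] at hdep
        obtain ⟨-, hnp, -⟩ := hdep
        refine ⟨ht1, ?_⟩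
        by_contra h
        apply hnp
        have e : i + t + 1 = i + (t + 1) := by ring
        rw [e]
        exact hC (t + 1) (by omega) (by omega)
      · rintro ⟨ht1, hts⟩
        exact ⟨⟨ht1, by omega⟩, hsmall t ht1 hts⟩
    rw [hset, Int.card_Icc]
    rw [show s - 1 + 1 - 1 = s - 1 by ring, Int.toNat_of_nonneg (by omega)]
  · rw [if_neg hC]
    push_neg at hC
    obtain ⟨m0, hm01, hm02, hm03⟩ := hC
    set T : Finset ℤ := (Finset.Icc (s + 1) ((f : ℤ) + 1)).filter fun m => a (i + m) ≠ p with hT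
    have hTne : T.Nonempty := ⟨m0, by simp [hT, Finset.mem_filter, Finset.mem_Icc, hm01, hm02, hm03]⟩
    set u : ℤ := T.min' hTne with hu
    have huT : u ∈ T := T.min'_mem hTne
    have hu1 : s + 1 ≤ u := by
      have := Finset.mem_filter.mp huT
      exact (Finset.mem_Icc.mp this.1).1
    have hu2 : u ≤ (f : ℤ) + 1 := by
      have := Finset.mem_filter.mp huT
      exact (Finset.mem_Icc.mp this.1).2
    have hu3 : a (i + u) ≠ p := (Finset.mem_filter.mp huT).2
    have humin : ∀ m : ℤ, s + 1 ≤ m → m < u → a (i + m) = p := by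
      intro m hm1 hm2
      by_contra h
      have hmem : m ∈ T := by
        refine Finset.mem_filter.mpr ⟨Finset.mem_Icc.mpr ⟨hm1, by omega⟩, h⟩
      have := T.min'_le m hmem
      omega
    have hu2' : u ≤ (f : ℤ) := by
      rcases eq_or_lt_of_le hu2 with h | h
      · exact absurd (h ▸ hfp) hu3
      · omega
    have hsf' : s ≤ (f : ℤ) - 1 := by omega
    have hset : ((Finset.Icc (1 : ℤ) ((f : ℤ) - 1)).filter fun t =>
        IsDependentPair p f a (i : ZMod f) ((i + t : ℤ) : ZMod f)) =
        insert (u - 1) (Finset.Icc 1 (s - 1)) := by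
      ext t
      simp only [Finset.mem_filter, Finset.mem_Icc, Finset.mem_insert]
      constructor
      · rintro ⟨⟨ht1, ht2⟩, hdep⟩
        rw [dep_iff p f a hf hper i t ht1 ht2] at hdep
        obtain ⟨-, hnp, s', hs'1, hs'2, hc1, hc2⟩ := hdep
        by_cases hts : t ≤ s - 1
        · exact Or.inr ⟨ht1, hts⟩
        · left
          have hts' : s ≤ t := by omega
          have hss' : s' = s := by
            rcases lt_trichotomy s' s with h | h | h
            · exfalso
              have h1 : a (i + (s' + 1)) = p - 1 := hchain (s' + 1) (by omega) (by omega)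
              have h2 : a (i + s' + 1) = p := hc2 (i + s' + 1) (le_refl _) (by omega)
              have e : i + (s' + 1) = i + s' + 1 := by ring
              rw [e, h2] at h1
              omega
            · exact h
            · exfalso
              exact hstop (hc1 (i + s + 1) (by omega) (by omega))
          subst hss'
          -- u ≤ t+1
          have hTt : t + 1 ∈ T := by
            refine Finset.mem_filter.mpr ⟨Finset.mem_Icc.mpr ⟨by omega, by omega⟩, ?_⟩
            have e : i + (t + 1) = i + t + 1 := by ring
            rw [e]; exact hnp
          have hle : u ≤ t + 1 := T.min'_le _ hTt
          have hgt : t < u := by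
            by_contra h
            push_neg at h
            exact hu3 (hc2 (i + u) (by omega) (by omega))
          omega
      · rintro (ht | ⟨ht1, hts⟩)
        · subst ht
          refine ⟨⟨by omega, by omega⟩, ?_⟩
          rw [dep_iff p f a hf hper i (u - 1) (by omega) (by omega)]
          refine ⟨hi, ?_, s, hs1, by omega, ?_, ?_⟩
          · have e : i + (u - 1) + 1 = i + u := by ring
            rw [e]; exact hu3
          · intro m hm1 hm2
            have e : m = i + (m - i) := by ring
            rw [e]; exact hchain (m - i) (by omega) (by omega)
          · intro m hm1 hm2
            have e : m = i + (m - i) := by ring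
            rw [e]; exact humin (m - i) (by omega) (by omega)
        · exact ⟨⟨ht1, by omega⟩, hsmall t ht1 hts⟩
    rw [hset, Finset.card_insert_of_notMem (by simp [Finset.mem_Icc]; omega), Int.card_Icc]
    push_cast
    rw [show s - 1 + 1 - 1 = s - 1 by ring, Int.toNat_of_nonneg (by omega)]
    ring
end

section
/- Let (a_0, …, a_{f−1}) be a tame signature for a prime p and integer f ≥ 1, and set n_i = ∑_{j=0}^{f−1} a_{i+j} p^j for i ∈ ℤ. Then: (i) n_0 ≡ n_i p^i (mod p^f − 1) for all i; (ii) if a_i ≠ p, then (p^f − 1)/(p − 1) ≤ n_i < p(p^f − 1)/(p − 1); (iii) if j is such that a_j ≠ p−1 and (a_i, a_{i+1}, …, a_{j−1}) = (p, p−1, …, p−1) for some i with j − f ≤ i < j, then p^f − 1 < n_j < p(p^f − 1)/(p − 1). -/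
open scoped Classical

def sigN (p f : ℕ) (a : ℤ → ℕ) (i : ℤ) : ℤ :=
  ∑ j ∈ Finset.range f, (a (i + j) : ℤ) * (p : ℤ) ^ j

section Aux
variable {p f : ℕ} {a : ℤ → ℕ}

lemma aux_period (hper : ∀ j : ℤ, a (j + f) = a j) (m k : ℤ) :
    a (m + k * f) = a m := by
  induction k using Int.induction_on with
  | zero => simp
  | succ n ih =>
      have h := hper (m + (n : ℤ) * f)
      rw [show m + ((n : ℤ) + 1) * f = m + (n : ℤ) * f + f by ring]
      rw [h, ih]
  | pred n ih =>
      have h := hper (m + (-(n : ℤ) - 1) * f)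
      rw [show m + (-(n : ℤ) - 1) * f + f = m + (-(n : ℤ)) * f by ring] at h
      rw [h] at ih
      exact ih

lemma sigN_rec (hper : ∀ j : ℤ, a (j + f) = a j) (i : ℤ) :
    (p : ℤ) * sigN p f a (i + 1) = sigN p f a i + (a i : ℤ) * ((p : ℤ) ^ f - 1) := by
  have h1 := Finset.sum_range_succ (fun j : ℕ => (a (i + j) : ℤ) * (p : ℤ) ^ j) f
  have h2 := Finset.sum_range_succ' (fun j : ℕ => (a (i + j) : ℤ) * (p : ℤ) ^ j) f
  have hiF : a (i + (f : ℤ)) = a i := hper i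
  have hcongr : ∀ j ∈ Finset.range f,
      (a (i + ((j : ℕ) + 1 : ℕ)) : ℤ) * (p : ℤ) ^ ((j : ℕ) + 1)
        = (p : ℤ) * ((a (i + 1 + (j : ℕ)) : ℤ) * (p : ℤ) ^ (j : ℕ)) := by
    intro j _
    have harg : i + (((j : ℕ) + 1 : ℕ) : ℤ) = i + 1 + (j : ℕ) := by push_cast; ring
    rw [harg]; ring
  rw [Finset.sum_congr rfl hcongr] at h2
  rw [← Finset.mul_sum] at h2
  simp only [hiF] at h1
  have h0 : (a (i + ((0 : ℕ) : ℤ)) : ℤ) * (p : ℤ) ^ (0 : ℕ) = (a i : ℤ) := by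
    norm_num
  rw [h0] at h2
  show (p : ℤ) * (∑ j ∈ Finset.range f, (a (i + 1 + j) : ℤ) * (p : ℤ) ^ j) = _
  have := h1.symm.trans h2
  unfold sigN
  linarith [this]

lemma sigN_lower (hp2 : 2 ≤ p) (hbd : ∀ j : ℤ, 1 ≤ a j ∧ a j ≤ p) (i : ℤ) :
    (p : ℤ) ^ f - 1 ≤ ((p : ℤ) - 1) * sigN p f a i := by
  have hpnn : (0 : ℤ) ≤ p := by positivity
  have h : ∑ j ∈ Finset.range f, (p : ℤ) ^ j ≤ sigN p f a i := by
    apply Finset.sum_le_sum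
    intro j _
    have h1 : (1 : ℤ) ≤ (a (i + j) : ℤ) := by exact_mod_cast (hbd (i + j)).1
    nlinarith [pow_nonneg hpnn j]
  have hg := geom_sum_mul ((p : ℤ)) f
  have hp1 : (0 : ℤ) ≤ (p : ℤ) - 1 := by
    have : (2 : ℤ) ≤ p := by exact_mod_cast hp2
    linarith
  nlinarith [mul_le_mul_of_nonneg_left h hp1]

lemma sigN_upper (hp2 : 2 ≤ p) (hsig : IsTameSignature p f a) (i : ℤ) :
    ((p : ℤ) - 1) * sigN p f a i < (p : ℤ) * ((p : ℤ) ^ f - 1) := by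
  obtain ⟨hf, hper, hbd, j, hj⟩ := hsig
  have hfz : ((f : ℤ)) ≠ 0 := by exact_mod_cast hf.ne'
  have hfpos : (0 : ℤ) < f := by exact_mod_cast hf
  have hpnn : (0 : ℤ) ≤ p := by positivity
  have hpz : (2 : ℤ) ≤ p := by exact_mod_cast hp2
  -- find t < f with a (i + t) ≠ p
  set t : ℕ := ((j - i) % f).toNat with ht
  have ht0 : (0 : ℤ) ≤ (j - i) % f := Int.emod_nonneg _ hfz
  have htf : (j - i) % f < f := Int.emod_lt_of_pos _ hfpos
  have htcast : ((t : ℤ)) = (j - i) % f := Int.toNat_of_nonneg ht0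
  have htlt : t < f := by
    have : (t : ℤ) < f := by rw [htcast]; exact htf
    exact_mod_cast this
  have hat : a (i + t) ≠ p := by
    have hdm := Int.mul_ediv_add_emod (j - i) f
    have harg : i + (t : ℤ) = j + (-((j - i) / f)) * f := by
      rw [htcast]; linarith [hdm]
    rw [harg, aux_period hper j _]
    exact hj
  have hstrict : sigN p f a i < ∑ k ∈ Finset.range f, (p : ℤ) ^ (k + 1) := by
    apply Finset.sum_lt_sum
    · intro k _
      have h2 : (a (i + k) : ℤ) ≤ p := by exact_mod_cast (hbd (i + k)).2
      have h3 := mul_le_mul_of_nonneg_right h2 (pow_nonneg hpnn k)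
      rw [pow_succ]
      nlinarith [h3]
    · refine ⟨t, Finset.mem_range.mpr htlt, ?_⟩
      have h2 : a (i + t) ≤ p := (hbd (i + t)).2
      have h3 : (a (i + t) : ℤ) ≤ (p : ℤ) - 1 := by
        have : a (i + t) < p := lt_of_le_of_ne h2 hat
        have : (a (i + t) : ℤ) < p := by exact_mod_cast this
        linarith
      have hpow : (0 : ℤ) < (p : ℤ) ^ t := by positivity
      calc (a (i + t) : ℤ) * (p : ℤ) ^ t ≤ ((p : ℤ) - 1) * (p : ℤ) ^ t := by
            exact mul_le_mul_of_nonneg_right h3 hpow.le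
        _ < (p : ℤ) ^ (t + 1) := by rw [pow_succ]; nlinarith
  have hsum : ∑ k ∈ Finset.range f, (p : ℤ) ^ (k + 1)
      = (p : ℤ) * ∑ k ∈ Finset.range f, (p : ℤ) ^ k := by
    rw [Finset.mul_sum]
    exact Finset.sum_congr rfl fun k _ => by rw [pow_succ]; ring
  have hg := geom_sum_mul ((p : ℤ)) f
  have hp1 : (0 : ℤ) < (p : ℤ) - 1 := by linarith
  have := mul_lt_mul_of_pos_left hstrict hp1
  rw [hsum] at this
  nlinarith [this]

end Aux

/-- Let `(a_0,…,a_{f−1})` be a tame signature and `n_i = ∑_{j=0}^{f−1} a_{i+j} p^j`.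
Then: (i) `n_0 ≡ n_i p^i (mod p^f − 1)` for all `i ≥ 0`;
(ii) if `a_i ≠ p` then `(p^f−1)/(p−1) ≤ n_i < p(p^f−1)/(p−1)` (stated multiplied
through by `p − 1`);
(iii) if `a_j ≠ p−1` and `(a_i, …, a_{j−1}) = (p, p−1, …, p−1)` for some
`j − f ≤ i < j`, then `p^f − 1 < n_j < p(p^f−1)/(p−1)`. -/
theorem sigN_props (p f : ℕ) (a : ℤ → ℕ) (hp : p.Prime)
    (hsig : IsTameSignature p f a) :
    (∀ i : ℕ, ((p : ℤ) ^ f - 1) ∣ (sigN p f a i * (p : ℤ) ^ i - sigN p f a 0)) ∧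
      (∀ i : ℤ, a i ≠ p →
        ((p : ℤ) ^ f - 1) ≤ ((p : ℤ) - 1) * sigN p f a i ∧
          ((p : ℤ) - 1) * sigN p f a i < (p : ℤ) * ((p : ℤ) ^ f - 1)) ∧
      (∀ j : ℤ, a j ≠ p - 1 →
        (∃ i : ℤ, j - (f : ℤ) ≤ i ∧ i < j ∧ a i = p ∧
          ∀ m : ℤ, i < m → m < j → a m = p - 1) →
        ((p : ℤ) ^ f - 1) < sigN p f a j ∧
          ((p : ℤ) - 1) * sigN p f a j < (p : ℤ) * ((p : ℤ) ^ f - 1)) := by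
  obtain ⟨hf, hper, hbd, hex⟩ := hsig
  have hsig' : IsTameSignature p f a := ⟨hf, hper, hbd, hex⟩
  have hp2 : 2 ≤ p := hp.two_le
  have hpz : (2 : ℤ) ≤ p := by exact_mod_cast hp2
  refine ⟨?_, ?_, ?_⟩
  · -- part (i)
    intro i
    induction i with
    | zero => simp
    | succ n ih =>
        obtain ⟨c, hc⟩ := ih
        refine ⟨c + (a n : ℤ) * (p : ℤ) ^ n, ?_⟩
        have hrec := sigN_rec (p := p) hper (n : ℤ)
        push_cast
        linear_combination hc + (p : ℤ) ^ n * hrec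
  · -- part (ii)
    intro i _
    exact ⟨sigN_lower hp2 hbd i, sigN_upper hp2 hsig' i⟩
  · -- part (iii)
    intro j _ ⟨i, hif, hij, hai, hbet⟩
    refine ⟨?_, sigN_upper hp2 hsig' j⟩
    set k : ℕ := (i + f - j).toNat with hkdef
    have hk0 : (0 : ℤ) ≤ i + f - j := by linarith
    have hkcast : ((k : ℤ)) = i + f - j := Int.toNat_of_nonneg hk0
    have hkf : k < f := by
      have : (k : ℤ) < f := by rw [hkcast]; linarith
      exact_mod_cast this
    have hkle : k ≤ f := hkf.le
    -- split the sum
    have hsplit : sigN p f a j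
        = (∑ t ∈ Finset.Ico 0 k, (a (j + t) : ℤ) * (p : ℤ) ^ t)
          + ∑ t ∈ Finset.Ico k f, (a (j + t) : ℤ) * (p : ℤ) ^ t := by
      unfold sigN
      rw [Finset.range_eq_Ico, ← Finset.sum_Ico_consecutive _ (Nat.zero_le k) hkle]
    have hbot : ∑ t ∈ Finset.Ico k f, (a (j + t) : ℤ) * (p : ℤ) ^ t
        = (a (j + k) : ℤ) * (p : ℤ) ^ k
          + ∑ t ∈ Finset.Ico (k + 1) f, (a (j + t) : ℤ) * (p : ℤ) ^ t :=
      Finset.sum_eq_sum_Ico_succ_bot hkf _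
    have hak : (a (j + (k : ℤ)) : ℤ) = p := by
      have harg : j + (k : ℤ) = i + f := by rw [hkcast]; ring
      rw [harg, hper i, hai]
    have hmid : ∀ t ∈ Finset.Ico (k + 1) f,
        (a (j + t) : ℤ) * (p : ℤ) ^ t = ((p : ℤ) - 1) * (p : ℤ) ^ t := by
      intro t htm
      obtain ⟨ht1, ht2⟩ := Finset.mem_Ico.mp htm
      have hm1 : i < j + t - f := by
        have : (k : ℤ) + 1 ≤ t := by exact_mod_cast ht1
        rw [hkcast] at this; linarith
      have hm2 : j + t - f < j := by
        have : (t : ℤ) < f := by exact_mod_cast ht2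
        linarith
      have hav : a (j + t - f) = p - 1 := hbet _ hm1 hm2
      have harg : j + (t : ℤ) = (j + t - f) + f := by ring
      rw [harg, hper, hav]
      have hcast : ((p - 1 : ℕ) : ℤ) = (p : ℤ) - 1 := by omega
      rw [hcast]
    rw [Finset.sum_congr rfl hmid, ← Finset.mul_sum] at hbot
    -- geometric computation for the tail
    have hgeo : ((p : ℤ) - 1) * ∑ t ∈ Finset.Ico (k + 1) f, (p : ℤ) ^ t
        = (p : ℤ) ^ f - (p : ℤ) ^ (k + 1) := by
      have hsub := Finset.sum_Ico_eq_sub (fun t => (p : ℤ) ^ t) (by omega : k + 1 ≤ f)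
      rw [hsub]
      have hg1 := geom_sum_mul ((p : ℤ)) f
      have hg2 := geom_sum_mul ((p : ℤ)) (k + 1)
      linarith [hg1, hg2]
    have hT : (0 : ℤ) ≤ ∑ t ∈ Finset.Ico 0 k, (a (j + t) : ℤ) * (p : ℤ) ^ t := by
      apply Finset.sum_nonneg
      intro t _
      positivity
    have hpk : (p : ℤ) * (p : ℤ) ^ k = (p : ℤ) ^ (k + 1) := by
      rw [pow_succ]; ring
    rw [hsplit, hbot, hak]
    linarith [hgeo, hT, hpk]
end
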